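/- arXiv:1908.03741 — 4 statements merged into one kernel-verified Lean document; each statement's English description precedes it below -/
import Mathlib

section
/- For any two partitions λ and μ of a positive integer n, if 𝝀 and 𝝁 denote the partitions obtained by subdividing each square of the Young diagrams of λ and μ into d² congruent squares (i.e., if λ = 1^{m₁}2^{m₂}…n^{m_n} then 𝝀 = d^{d m₁}(2d)^{d m₂}…(nd)^{d m_n}), then the irreducible character value χ_𝝀(𝝁) of the symmetric group S_{d²n} is divisible by d!. -/
/-- Murnaghan–Nakayama recursion on beta-sets: `MNchar S α` computes the character
value via successive rim-hook (border-strip) removals encoded by beta-numbers. -/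
def MNchar : Finset ℕ → List ℕ → ℤ
  | S, [] => if S = Finset.range S.card then 1 else 0
  | S, k :: rest =>
      ∑ s ∈ S.filter (fun s => k ≤ s ∧ s - k ∉ S),
        (-1 : ℤ) ^ (S.filter (fun t => s - k < t ∧ t < s)).card *
          MNchar (insert (s - k) (S.erase s)) rest

/-- Canonical beta-set of a partition (given as a multiset of parts). -/
def betaSet (P : Multiset ℕ) : Finset ℕ :=
  ((List.range (P.sort (· ≤ ·)).length).map
    (fun i => (P.sort (· ≤ ·)).getD i 0 + i)).toFinset

/-- Irreducible character of the symmetric group indexed by `lam`, at cycle type `mu`. -/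
def chi (lam mu : Multiset ℕ) : ℤ := MNchar (betaSet lam) (mu.sort (· ≤ ·))

/-- d-fold dilation of a partition: each part p becomes d copies of d*p. -/
def dilate (d : ℕ) (P : Multiset ℕ) : Multiset ℕ :=
  P.bind fun p => Multiset.replicate d (d * p)

/-- Scale every part of a partition by d. -/
def scale (d : ℕ) (P : Multiset ℕ) : Multiset ℕ := P.map (d * ·)

def IsPartitionOf (n : ℕ) (P : Multiset ℕ) : Prop := (∀ p ∈ P, 0 < p) ∧ P.sum = n

def zerosBefore (β : List Bool) (j : ℕ) : ℕ := (β.take j).count false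

/-- Shape of a binary sequence: one part for each `true`, equal to the number of
`false`s to its left (zero parts discarded). -/
def shapeOf (β : List Bool) : Multiset ℕ :=
  ↑((List.range β.length).filterMap fun j =>
      if β.getD j false = true ∧ 0 < zerosBefore β j then some (zerosBefore β j) else none)

/-- The word of a partition: the unique binary sequence starting with 0 and ending
with 1 whose shape is the partition. -/
def word (P : Multiset ℕ) : List Bool :=
  (List.range (P.sup + Multiset.card P)).map fun j => decide (j ∈ betaSet P)

/-- Cells of the Young diagram of a partition. -/
def cells (P : Multiset ℕ) : Finset (ℕ × ℕ) :=
  (Finset.range (Multiset.card P) ×ˢ Finset.range (P.sup + 1)).filter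
    fun x => x.2 < ((P.sort (· ≤ ·)).reverse.getD x.1 0)

def CellAdj (x y : ℕ × ℕ) : Prop :=
  (x.1 = y.1 ∧ (x.2 = y.2 + 1 ∨ y.2 = x.2 + 1)) ∨
  (x.2 = y.2 ∧ (x.1 = y.1 + 1 ∨ y.1 = x.1 + 1))

/-- A set of cells is a rim hook: nonempty, connected, no 2×2 square. -/
def IsRimHook (s : Finset (ℕ × ℕ)) : Prop :=
  s.Nonempty ∧
  (∀ x ∈ s, ∀ y ∈ s, Relation.ReflTransGen (fun u v => v ∈ s ∧ CellAdj u v) x y) ∧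
  ∀ i j : ℕ, ¬((i, j) ∈ s ∧ (i + 1, j) ∈ s ∧ (i, j + 1) ∈ s ∧ (i + 1, j + 1) ∈ s)

/-- A cascade, encoded by its first row and the sequence of 0-1 swap positions
`(aᵢ, bᵢ)` relating consecutive rows. -/
structure Cascade where
  top : List Bool
  swaps : List (ℕ × ℕ)

def applySwaps (r : List Bool) (s : List (ℕ × ℕ)) : List Bool :=
  s.foldl (fun r ab => (r.set ab.1 true).set ab.2 false) r

def cascadeRow (C : Cascade) (i : ℕ) : List Bool := applySwaps C.top (C.swaps.take i)

def cascadeBot (C : Cascade) : List Bool := applySwaps C.top C.swaps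

/-- The defining conditions of a cascade. -/
def Cascade.Valid (C : Cascade) : Prop :=
  C.top.head? = some false ∧ C.top.getLast? = some true ∧
  (∀ i < C.swaps.length,
    (C.swaps.getD i (0, 0)).1 < (C.swaps.getD i (0, 0)).2 ∧
    (C.swaps.getD i (0, 0)).2 < (cascadeRow C i).length ∧
    (cascadeRow C i).getD (C.swaps.getD i (0, 0)).1 true = false ∧
    (cascadeRow C i).getD (C.swaps.getD i (0, 0)).2 false = true) ∧
  ∃ u v, cascadeBot C = List.replicate u true ++ List.replicate v false

def cascadeShape (C : Cascade) : Multiset ℕ := shapeOf C.top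

def cascadeContent (C : Cascade) : List ℕ := C.swaps.map fun ab => ab.2 - ab.1

/-- Crossings of a cascade: pairs (i,j) with row i having a 1 in position j
strictly between the swapped positions aᵢ < j < bᵢ. -/
def cascadeCrossings (C : Cascade) : Finset (ℕ × ℕ) :=
  (Finset.range C.swaps.length ×ˢ Finset.range C.top.length).filter fun ij =>
    (cascadeRow C ij.1).getD ij.2 false = true ∧
    (C.swaps.getD ij.1 (0, 0)).1 < ij.2 ∧ ij.2 < (C.swaps.getD ij.1 (0, 0)).2

def cascadeWt (C : Cascade) : ℤ := (-1) ^ (cascadeCrossings C).card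

def traceSwaps (s : List (ℕ × ℕ)) (p : ℕ) : ℕ :=
  s.foldl (fun p ab => if p = ab.1 then ab.2 else if p = ab.2 then ab.1 else p) p

/-- The path starting in column x: its position after i swaps. -/
def cascadePath (C : Cascade) (x i : ℕ) : ℕ := traceSwaps (C.swaps.take i) x

def onesPositions (r : List Bool) : List ℕ :=
  (List.range r.length).filter fun j => r.getD j false

/-- The permutation π_C associated to a cascade, as a function on {0,…,k−1}. -/
def cascadePerm (C : Cascade) (j : ℕ) : ℕ :=
  (onesPositions (cascadeBot C)).idxOf
    (traceSwaps C.swaps ((onesPositions C.top).getD j 0))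

/-- Sign of a function on {0,…,k−1} via inversion count. -/
def signOf (f : ℕ → ℕ) (k : ℕ) : ℤ :=
  (-1) ^ ((Finset.range k ×ˢ Finset.range k).filter fun p =>
      p.1 < p.2 ∧ f p.2 < f p.1).card

/-- Crossings of the two paths starting in columns x and y. -/
def pathCrossings (C : Cascade) (x y : ℕ) : Finset (ℕ × ℕ) :=
  (Finset.range C.swaps.length ×ˢ Finset.range C.top.length).filter fun ij =>
    cascadePath C x ij.1 = ij.2 ∧ cascadePath C x ij.1 < cascadePath C y ij.1 ∧
    cascadePath C y (ij.1 + 1) < cascadePath C x (ij.1 + 1)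

def rimRows (s : Finset (ℕ × ℕ)) : ℕ := (s.image Prod.fst).card

/-- A rim hook tableau, as the chain of successive shapes λ¹ ⊃ … ⊃ λ^{m+1} = ∅. -/
def IsRHT (T : List (Multiset ℕ)) : Prop :=
  2 ≤ T.length ∧ (∀ P ∈ T, ∀ p ∈ P, 0 < p) ∧ T.getLast? = some 0 ∧
  ∀ i, i + 1 < T.length →
    cells (T.getD (i + 1) 0) ⊆ cells (T.getD i 0) ∧
    IsRimHook (cells (T.getD i 0) \ cells (T.getD (i + 1) 0))

def tabShape (T : List (Multiset ℕ)) : Multiset ℕ := T.headI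

def tabContent (T : List (Multiset ℕ)) : List ℕ :=
  (List.range (T.length - 1)).map fun i =>
    (cells (T.getD i 0) \ cells (T.getD (i + 1) 0)).card

def tabWt (T : List (Multiset ℕ)) : ℤ :=
  ∏ i ∈ Finset.range (T.length - 1),
    (-1 : ℤ) ^ (rimRows (cells (T.getD i 0) \ cells (T.getD (i + 1) 0)) - 1)

/-- Θ : cascades → rim hook tableaux, via the shapes of the successive rows. -/
def theta (C : Cascade) : List (Multiset ℕ) :=
  (List.range (C.swaps.length + 1)).map fun i => shapeOf (cascadeRow C i)

/-- The block column permutation: j = i + d·k with i < d goes to σ(i) + d·k. -/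
def gammaMap (d : ℕ) (σ : Equiv.Perm (Fin d)) (j : ℕ) : ℕ :=
  if h : 0 < d then d * (j / d) + (σ ⟨j % d, Nat.mod_lt j h⟩ : ℕ) else j

def permuteCols (d : ℕ) (σ : Equiv.Perm (Fin d)) (r : List Bool) : List Bool :=
  (List.range r.length).map fun j => r.getD (gammaMap d σ⁻¹ j) false

/-- The action of σ ∈ S_d on a cascade: permute columns within blocks of size d. -/
def actC (d : ℕ) (σ : Equiv.Perm (Fin d)) (C : Cascade) : Cascade :=
  ⟨permuteCols d σ C.top, C.swaps.map fun ab => (gammaMap d σ ab.1, gammaMap d σ ab.2)⟩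



lemma MNchar_nil (S : Finset ℕ) : MNchar S [] = if S = Finset.range S.card then 1 else 0 := rfl

lemma MNchar_cons (S : Finset ℕ) (k : ℕ) (rest : List ℕ) :
    MNchar S (k :: rest) =
      ∑ s ∈ S.filter (fun s => k ≤ s ∧ s - k ∉ S),
        (-1 : ℤ) ^ (S.filter (fun t => s - k < t ∧ t < s)).card *
          MNchar (insert (s - k) (S.erase s)) rest := rfl

/-- residue-r quotient of a beta-set. -/
def qt (d r : ℕ) (S : Finset ℕ) : Finset ℕ := (S.filter (fun s => s % d = r)).image (· / d)

lemma dqr_mod {d r : ℕ} (q : ℕ) (hr : r < d) : (d * q + r) % d = r := by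
  simp [Nat.add_mul_mod_self_left, Nat.mod_eq_of_lt hr, Nat.mul_add_mod]

lemma dqr_div {d r : ℕ} (q : ℕ) (hr : r < d) : (d * q + r) / d = q := by
  rw [Nat.mul_add_div (by omega : 0 < d), Nat.div_eq_of_lt hr]
  omega

lemma eq_dqr {d : ℕ} (s : ℕ) (hd : 0 < d) : s = d * (s / d) + s % d :=
  (Nat.div_add_mod s d).symm

lemma mem_qt {d r : ℕ} {S : Finset ℕ} (hr : r < d) {q : ℕ} :
    q ∈ qt d r S ↔ d * q + r ∈ S := by
  unfold qt
  simp only [Finset.mem_image, Finset.mem_filter]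
  constructor
  · rintro ⟨t, ⟨ht, hres⟩, hdiv⟩
    have : t = d * q + r := by
      have := Nat.div_add_mod t d; subst hdiv hres; omega
    rwa [← this]
  · intro h
    exact ⟨d * q + r, ⟨h, dqr_mod q hr⟩, dqr_div q hr⟩

lemma card_qt {d r : ℕ} (S : Finset ℕ) (hd : 0 < d) :
    (qt d r S).card = (S.filter (fun s => s % d = r)).card := by
  apply Finset.card_image_of_injOn
  intro a ha b hb hab
  simp only [Finset.coe_filter, Set.mem_setOf_eq] at ha hb
  simp only at hab
  obtain ⟨-, ha2⟩ := ha
  obtain ⟨-, hb2⟩ := hb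
  calc a = d * (a / d) + a % d := (Nat.div_add_mod a d).symm
    _ = d * (b / d) + b % d := by rw [hab, ha2, hb2]
    _ = b := Nat.div_add_mod b d

/-- inversion count between residue classes. -/
def invP (d : ℕ) (S : Finset ℕ) : ℕ :=
  ((S ×ˢ S).filter fun p => p.1 < p.2 ∧ p.2 % d < p.1 % d).card

/-- select the entries of `ks` at the positions where `as` equals `r`. -/
def sel {α : Type*} [DecidableEq α] (r : α) : List α → List ℕ → List ℕ
  | [], _ => []
  | _, [] => []
  | a :: as, k :: ks => if a = r then k :: sel r as ks else sel r as ks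

lemma parity_filter {α : Type*} [DecidableEq α] (t : Finset α) (A B : α → Prop)
    [DecidablePred A] [DecidablePred B] :
    (t.filter A).card + (t.filter B).card ≡
      (t.filter fun x => ¬(A x ↔ B x)).card [MOD 2] := by
  induction t using Finset.induction_on with
  | empty => rfl
  | @insert a s ha ih =>
    rw [Finset.filter_insert, Finset.filter_insert, Finset.filter_insert]
    have h1 : a ∉ s.filter A := fun h => ha (Finset.mem_filter.mp h).1
    have h2 : a ∉ s.filter B := fun h => ha (Finset.mem_filter.mp h).1
    have h3 : a ∉ s.filter (fun x => ¬(A x ↔ B x)) := fun h => ha (Finset.mem_filter.mp h).1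
    unfold Nat.ModEq at ih ⊢
    by_cases hA : A a <;> by_cases hB : B a <;>
      simp [hA, hB, Finset.card_insert_of_notMem, h1, h2, h3] <;> omega

section Sign

variable {d k s : ℕ} {S : Finset ℕ}

/-- the swap map. -/
private def ph (s k : ℕ) : ℕ → ℕ := fun x => if x = s then s - k else x

lemma ph_image (hs : s ∈ S) (hnk : s - k ∉ S) :
    insert (s - k) (S.erase s) = S.image (ph s k) := by
  ext x
  simp only [Finset.mem_insert, Finset.mem_erase, Finset.mem_image, ph]
  constructor
  · rintro (rfl | ⟨hne, hx⟩)
    · exact ⟨s, hs, by simp⟩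
    · exact ⟨x, hx, by simp [hne]⟩
  · rintro ⟨y, hy, rfl⟩
    by_cases hys : y = s
    · simp [hys]
    · simp only [if_neg hys]
      right
      exact ⟨hys, hy⟩

lemma ph_injOn (hnk : s - k ∉ S) : Set.InjOn (ph s k) S := by
  intro a ha b hb hab
  unfold ph at hab
  by_cases has : a = s <;> by_cases hbs : b = s
  · rw [has, hbs]
  · rw [if_pos has, if_neg hbs] at hab; exact absurd (hab ▸ hb) hnk
  · rw [if_neg has, if_pos hbs] at hab; exact absurd (hab.symm ▸ ha) hnk
  · rwa [if_neg has, if_neg hbs] at hab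

lemma prod_image_prodMap {α β γ δ : Type*} [DecidableEq γ] [DecidableEq δ]
    (s : Finset α) (t : Finset β) (f : α → γ) (g : β → δ) :
    (s.image f) ×ˢ (t.image g) = (s ×ˢ t).image (Prod.map f g) := by
  ext ⟨x, y⟩
  simp only [Finset.mem_product, Finset.mem_image, Prod.ext_iff, Prod.map, Prod.exists]
  aesop

lemma sign_lemma (hd : 0 < d) (hdk : d ∣ k) (hs : s ∈ S) (hks : k ≤ s)
    (hnk : s - k ∉ S) :
    invP d S + invP d (insert (s - k) (S.erase s)) ≡
      (S.filter fun t => s - k < t ∧ t < s).card +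
      (S.filter fun t => (s - k < t ∧ t < s) ∧ t % d = s % d).card [MOD 2] := by
  classical
  have h0 : s - k ≠ s := by intro h; rw [h] at hnk; exact hnk hs
  have hmod : (s - k) % d = s % d := by
    obtain ⟨c, hc⟩ := hdk
    obtain ⟨m, hm⟩ := Nat.exists_eq_add_of_le hks
    have hsk : s - k = m := by omega
    rw [hsk, hm, hc, Nat.mul_add_mod]
  -- invP of the moved set, as a filter over S ×ˢ S
  have hA : invP d (insert (s - k) (S.erase s)) =
      ((S ×ˢ S).filter fun p =>
        ph s k p.1 < ph s k p.2 ∧ (ph s k p.2) % d < (ph s k p.1) % d).card := by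
    rw [ph_image hs hnk]
    unfold invP
    rw [prod_image_prodMap, Finset.filter_image]
    apply Finset.card_image_of_injOn
    intro p hp q hq hpq
    simp only [Finset.coe_filter, Set.mem_setOf_eq, Finset.mem_product] at hp hq
    have h1 := ph_injOn (S := S) hnk hp.1.1 hq.1.1 (congrArg Prod.fst hpq)
    have h2 := ph_injOn (S := S) hnk hp.1.2 hq.1.2 (congrArg Prod.snd hpq)
    exact Prod.ext h1 h2
  -- parity reduction to the set of pairs whose status changed
  have hpar : invP d S + invP d (insert (s - k) (S.erase s)) ≡
      ((S ×ˢ S).filter fun p => ¬((p.1 < p.2 ∧ p.2 % d < p.1 % d) ↔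
        (ph s k p.1 < ph s k p.2 ∧ (ph s k p.2) % d < (ph s k p.1) % d))).card [MOD 2] := by
    rw [hA]
    exact parity_filter (S ×ˢ S) _ _
  -- identify the changed set as a union of two slices
  have hset : ((S ×ˢ S).filter fun p => ¬((p.1 < p.2 ∧ p.2 % d < p.1 % d) ↔
        (ph s k p.1 < ph s k p.2 ∧ (ph s k p.2) % d < (ph s k p.1) % d))) =
      ((S.filter fun t => (s - k < t ∧ t < s) ∧ s % d < t % d) ×ˢ {s}) ∪
      (({s} : Finset ℕ) ×ˢ (S.filter fun t => (s - k < t ∧ t < s) ∧ t % d < s % d)) := by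
    ext ⟨a, b⟩
    simp only [Finset.mem_filter, Finset.mem_product, Finset.mem_union, Finset.mem_singleton]
    constructor
    · rintro ⟨⟨ha, hb⟩, hne⟩
      unfold ph at hne
      by_cases hbs : b = s
      · by_cases has : a = s
        · exfalso; apply hne; rw [has, hbs, if_pos rfl]; simp
        · left
          have hak : a ≠ s - k := fun h => hnk (h ▸ ha)
          rw [hbs, if_neg has, if_pos rfl, hmod] at hne
          exact ⟨⟨ha, by omega⟩, hbs⟩
      · by_cases has : a = s
        · right
          have hbk : b ≠ s - k := fun h => hnk (h ▸ hb)
          rw [has, if_neg hbs, if_pos rfl, hmod] at hne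
          exact ⟨has, hb, by omega⟩
        · exfalso; apply hne; rw [if_neg has, if_neg hbs]
    · rintro (⟨⟨ha, hQ⟩, hb2⟩ | ⟨ha2, hb, hQ⟩)
      · have hak : a ≠ s - k := fun h => hnk (h ▸ ha)
        have has : a ≠ s := by omega
        refine ⟨⟨ha, hb2 ▸ hs⟩, ?_⟩
        unfold ph
        rw [hb2, if_neg has, if_pos rfl, hmod]
        omega
      · have hbk : b ≠ s - k := fun h => hnk (h ▸ hb)
        have hbs : b ≠ s := by omega
        refine ⟨⟨ha2 ▸ hs, hb⟩, ?_⟩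
        unfold ph
        rw [ha2, if_neg hbs, if_pos rfl, hmod]
        omega
  -- cardinality of the union
  have hcard : (((S.filter fun t => (s - k < t ∧ t < s) ∧ s % d < t % d) ×ˢ {s}) ∪
      (({s} : Finset ℕ) ×ˢ (S.filter fun t => (s - k < t ∧ t < s) ∧ t % d < s % d))).card =
      (S.filter fun t => (s - k < t ∧ t < s) ∧ s % d < t % d).card +
      (S.filter fun t => (s - k < t ∧ t < s) ∧ t % d < s % d).card := by
    rw [Finset.card_union_of_disjoint, Finset.card_product, Finset.card_product]
    · simp
    · rw [Finset.disjoint_left]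
      rintro ⟨a, b⟩ h1 h2
      simp only [Finset.mem_product, Finset.mem_filter, Finset.mem_singleton] at h1 h2
      omega
  -- split the crossing count by residue
  have hsplit : (S.filter fun t => s - k < t ∧ t < s).card =
      (S.filter fun t => (s - k < t ∧ t < s) ∧ t % d = s % d).card +
      ((S.filter fun t => (s - k < t ∧ t < s) ∧ s % d < t % d).card +
       (S.filter fun t => (s - k < t ∧ t < s) ∧ t % d < s % d).card) := by
    have e1 : (S.filter fun t => s - k < t ∧ t < s).card =
        (S.filter fun t => (s - k < t ∧ t < s) ∧ t % d = s % d).card +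
        (S.filter fun t => (s - k < t ∧ t < s) ∧ ¬(t % d = s % d)).card := by
      have := Finset.card_filter_add_card_filter_not
        (s := S.filter fun t => s - k < t ∧ t < s) (p := fun t => t % d = s % d)
      rw [Finset.filter_filter, Finset.filter_filter] at this
      omega
    have e2 : (S.filter fun t => (s - k < t ∧ t < s) ∧ ¬(t % d = s % d)).card =
        (S.filter fun t => (s - k < t ∧ t < s) ∧ s % d < t % d).card +
        (S.filter fun t => (s - k < t ∧ t < s) ∧ t % d < s % d).card := by
      have e3 : (S.filter fun t => (s - k < t ∧ t < s) ∧ s % d < t % d) =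
          ((S.filter fun t => (s - k < t ∧ t < s) ∧ ¬(t % d = s % d)).filter
            fun t => s % d < t % d) := by
        rw [Finset.filter_filter]
        apply Finset.filter_congr
        intro t _
        constructor
        · rintro ⟨h1, h2⟩; exact ⟨⟨h1, by omega⟩, h2⟩
        · rintro ⟨⟨h1, h2⟩, h3⟩; exact ⟨h1, h3⟩
      have e4 : (S.filter fun t => (s - k < t ∧ t < s) ∧ t % d < s % d) =
          ((S.filter fun t => (s - k < t ∧ t < s) ∧ ¬(t % d = s % d)).filter
            fun t => ¬(s % d < t % d)) := by
        rw [Finset.filter_filter]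
        apply Finset.filter_congr
        intro t _
        constructor
        · rintro ⟨h1, h2⟩; exact ⟨⟨h1, by omega⟩, by omega⟩
        · rintro ⟨⟨h1, h2⟩, h3⟩; exact ⟨h1, by omega⟩
      rw [e3, e4, Finset.card_filter_add_card_filter_not]
    omega
  rw [hset, hcard] at hpar
  unfold Nat.ModEq at hpar ⊢
  omega

end Sign

section Quot

variable {d r c q u v : ℕ} {S : Finset ℕ}

lemma dqr_inj (hr : r < d) : d * u + r = d * v + r ↔ u = v := by
  constructor
  · intro h
    have := congrArg (· / d) h
    simpa [dqr_div _ hr] using this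
  · rintro rfl; rfl

lemma dqr_lt (hd : 0 < d) : d * u + r < d * v + r ↔ u < v := by
  constructor
  · intro h
    by_contra hvu
    push_neg at hvu
    have := Nat.mul_le_mul_left d hvu
    omega
  · intro h
    have := Nat.mul_le_mul_left d h
    have h2 : d * u + d ≤ d * (u + 1) := by rw [Nat.mul_add]; omega
    have h3 : d * (u + 1) ≤ d * v := Nat.mul_le_mul_left d h
    omega

lemma dqr_le (hr : r < d) : d * c ≤ d * q + r ↔ c ≤ q := by
  constructor
  · intro h
    by_contra hqc
    push_neg at hqc
    have h3 : d * (q + 1) ≤ d * c := Nat.mul_le_mul_left d hqc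
    rw [Nat.mul_add] at h3
    omega
  · intro h
    have := Nat.mul_le_mul_left d h
    omega

lemma sub_dqr (hr : r < d) (hcq : c ≤ q) : (d * q + r) - d * c = d * (q - c) + r := by
  obtain ⟨e, rfl⟩ := Nat.exists_eq_add_of_le hcq
  rw [Nat.add_sub_cancel_left, Nat.mul_add]
  omega

/-- the moved set in coordinates: same residue class. -/
lemma qt_move_same (hd : 0 < d) (hr : r < d) (hcq : c ≤ q) :
    qt d r (insert (d * q + r - d * c) (S.erase (d * q + r))) =
      insert (q - c) ((qt d r S).erase q) := by
  ext u
  rw [mem_qt hr, sub_dqr hr hcq]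
  simp only [Finset.mem_insert, Finset.mem_erase, mem_qt hr, dqr_inj hr]
  have := dqr_inj (u := u) (v := q) (d := d) hr
  tauto

/-- the moved set in coordinates: other residue classes. -/
lemma qt_move_other (hd : 0 < d) (hr : r < d) (hr' : r' < d) (hne : r' ≠ r) (hcq : c ≤ q) :
    qt d r' (insert (d * q + r - d * c) (S.erase (d * q + r))) = qt d r' S := by
  ext u
  rw [mem_qt hr', mem_qt hr', sub_dqr hr hcq]
  have h1 : d * u + r' ≠ d * (q - c) + r := by
    intro h
    have := congrArg (· % d) h
    simp only [dqr_mod _ hr', dqr_mod _ hr] at this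
    exact hne this
  have h2 : d * u + r' ≠ d * q + r := by
    intro h
    have := congrArg (· % d) h
    simp only [dqr_mod _ hr', dqr_mod _ hr] at this
    exact hne this
  simp [Finset.mem_insert, Finset.mem_erase, h1, h2]

/-- the filtered move-candidate set in coordinates. -/
lemma filt_res_eq (hd : 0 < d) (hr : r < d) :
    S.filter (fun t => (d * c ≤ t ∧ t - d * c ∉ S) ∧ t % d = r) =
      ((qt d r S).filter (fun u => c ≤ u ∧ u - c ∉ qt d r S)).image (fun u => d * u + r) := by
  ext t
  simp only [Finset.mem_filter, Finset.mem_image]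
  constructor
  · rintro ⟨ht, ⟨hc, hnin⟩, hres⟩
    refine ⟨t / d, ⟨?_, ?_, ?_⟩, ?_⟩
    · rw [mem_qt hr]
      have : d * (t / d) + r = t := by rw [← hres]; exact (Nat.div_add_mod t d)
      rwa [this]
    · rw [← dqr_le (q := t / d) hr]
      have : d * (t / d) + r = t := by rw [← hres]; exact (Nat.div_add_mod t d)
      rwa [this]
    · intro hmem
      rw [mem_qt hr] at hmem
      have ht' : d * (t / d) + r = t := by rw [← hres]; exact (Nat.div_add_mod t d)
      have hc' : c ≤ t / d := by
        rw [← dqr_le (q := t / d) hr]; rwa [ht']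
      rw [← sub_dqr hr hc', ht'] at hmem
      exact hnin hmem
    · rw [← hres]; exact Nat.div_add_mod t d
  · rintro ⟨u, ⟨hu, hc, hnin⟩, rfl⟩
    rw [mem_qt hr] at hu
    refine ⟨hu, ⟨?_, ?_⟩, dqr_mod _ hr⟩
    · rw [dqr_le hr]; exact hc
    · rw [sub_dqr hr hc]
      intro hmem
      rw [← mem_qt hr] at hmem
      exact hnin hmem

/-- same-residue crossings equal quotient crossings. -/
lemma csame_eq_qcross (hd : 0 < d) (hr : r < d) (hcq : c ≤ q) :
    (S.filter fun t => (d * q + r - d * c < t ∧ t < d * q + r) ∧ t % d = r).card =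
      ((qt d r S).filter fun u => q - c < u ∧ u < q).card := by
  rw [sub_dqr hr hcq]
  have himg : S.filter (fun t => (d * (q - c) + r < t ∧ t < d * q + r) ∧ t % d = r) =
      ((qt d r S).filter fun u => q - c < u ∧ u < q).image (fun u => d * u + r) := by
    ext t
    simp only [Finset.mem_filter, Finset.mem_image]
    constructor
    · rintro ⟨ht, ⟨h1, h2⟩, hres⟩
      have ht' : d * (t / d) + r = t := by rw [← hres]; exact Nat.div_add_mod t d
      refine ⟨t / d, ⟨?_, ?_, ?_⟩, ht'⟩
      · rw [mem_qt hr]; rwa [ht']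
      · rw [← dqr_lt (u := q - c) (v := t / d) hd]; rwa [ht']
      · rw [← dqr_lt (u := t / d) (v := q) hd]; rwa [ht']
    · rintro ⟨u, ⟨hu, h1, h2⟩, rfl⟩
      rw [mem_qt hr] at hu
      exact ⟨hu, ⟨(dqr_lt hd).2 h1, (dqr_lt hd).2 h2⟩, dqr_mod _ hr⟩
  rw [himg, Finset.card_image_of_injective _ (fun a b hab => (dqr_inj hr).1 hab)]

end Quot

lemma neg_one_pow_congr' {a b : ℕ} (h : a % 2 = b % 2) : ((-1 : ℤ)) ^ a = (-1) ^ b := by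
  cases Nat.even_or_odd a with
  | inl he =>
    rw [he.neg_one_pow, (Nat.even_iff.mpr (by have := Nat.even_iff.mp he; omega)).neg_one_pow]
  | inr ho =>
    rw [ho.neg_one_pow, (Nat.odd_iff.mpr (by have := Nat.odd_iff.mp ho; omega)).neg_one_pow]

lemma card_move {S : Finset ℕ} {s k : ℕ} (hs : s ∈ S) (hnk : s - k ∉ S) :
    (insert (s - k) (S.erase s)).card = S.card := by
  rw [Finset.card_insert_of_notMem (fun h => hnk (Finset.mem_of_mem_erase h)),
    Finset.card_erase_of_mem hs]
  have : 0 < S.card := Finset.card_pos.mpr ⟨s, hs⟩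
  omega

lemma bal_move {d l r c q : ℕ} {S : Finset ℕ} (hd : 0 < d) (hr : r < d)
    (hbal : ∀ r' < d, (S.filter (fun s => s % d = r')).card = l)
    (hmem : d * q + r ∈ S) (hcq : c ≤ q) (hnin : q - c ∉ qt d r S) :
    ∀ r' < d, ((insert (d * q + r - d * c) (S.erase (d * q + r))).filter
      (fun s => s % d = r')).card = l := by
  intro r' hr'
  rw [← card_qt _ hd]
  by_cases hrr : r' = r
  · subst hrr
    rw [qt_move_same hd hr hcq]
    rw [Finset.card_insert_of_notMem (fun h => hnin (Finset.mem_of_mem_erase h)),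
      Finset.card_erase_of_mem ((mem_qt hr).mpr hmem)]
    rw [card_qt _ hd, hbal r' hr']
    have : q ∈ qt d r' S := (mem_qt hr).mpr hmem
    have : 0 < (qt d r' S).card := Finset.card_pos.mpr ⟨q, this⟩
    rw [card_qt _ hd, hbal r' hr'] at this
    omega
  · rw [qt_move_other hd hr hr' hrr hcq, card_qt _ hd, hbal r' hr']

lemma qt_range {d l r : ℕ} (hd : 0 < d) (hr : r < d) :
    qt d r (Finset.range (d * l)) = Finset.range l := by
  ext u
  rw [mem_qt hr, Finset.mem_range, Finset.mem_range]
  constructor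
  · intro h
    by_contra hu
    push_neg at hu
    have := Nat.mul_le_mul_left d hu
    omega
  · intro h
    have h2 : d * (u + 1) ≤ d * l := Nat.mul_le_mul_left d h
    rw [Nat.mul_add] at h2
    omega

lemma card_eq_dl {d l : ℕ} {S : Finset ℕ} (hd : 0 < d)
    (hbal : ∀ r < d, (S.filter (fun s => s % d = r)).card = l) : S.card = d * l := by
  rw [Finset.card_eq_sum_card_fiberwise (f := fun s => s % d) (t := Finset.range d)
    (fun x _ => Finset.mem_range.mpr (Nat.mod_lt x hd))]
  rw [Finset.sum_congr rfl (fun r hr => hbal r (Finset.mem_range.mp hr))]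
  simp [Nat.mul_comm]

lemma eq_range_iff {d l : ℕ} {S : Finset ℕ} (hd : 0 < d)
    (hbal : ∀ r < d, (S.filter (fun s => s % d = r)).card = l) :
    S = Finset.range (d * l) ↔ ∀ r < d, qt d r S = Finset.range l := by
  constructor
  · rintro rfl r hr
    exact qt_range hd hr
  · intro h
    ext t
    rw [Finset.mem_range]
    constructor
    · intro ht
      have hr : t % d < d := Nat.mod_lt t hd
      have hq : t / d ∈ qt d (t % d) S := by
        rw [mem_qt hr]
        have : d * (t / d) + t % d = t := Nat.div_add_mod t d
        rwa [this]
      rw [h _ hr, Finset.mem_range] at hq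
      have h2 : d * (t / d + 1) ≤ d * l := Nat.mul_le_mul_left d hq
      rw [Nat.mul_add] at h2
      have h3 : d * (t / d) + t % d = t := Nat.div_add_mod t d
      omega
    · intro ht
      have hr : t % d < d := Nat.mod_lt t hd
      have hq : t / d ∈ Finset.range l := by
        rw [Finset.mem_range]
        by_contra hu
        push_neg at hu
        have h2 := Nat.mul_le_mul_left d hu
        have h3 : d * (t / d) + t % d = t := Nat.div_add_mod t d
        omega
      rw [← h _ hr, mem_qt hr] at hq
      have h3 : d * (t / d) + t % d = t := Nat.div_add_mod t d
      rwa [h3] at hq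

lemma base_case {d l : ℕ} {S : Finset ℕ} (hd : 0 < d)
    (hbal : ∀ r < d, (S.filter (fun s => s % d = r)).card = l) :
    (if S = Finset.range S.card then (1 : ℤ) else 0) =
      (-1) ^ (invP d S + invP d (Finset.range S.card)) *
        ∏ r : Fin d, (if qt d r.1 S = Finset.range (qt d r.1 S).card then (1 : ℤ) else 0) := by
  have hcard := card_eq_dl hd hbal
  have hqcard : ∀ r : Fin d, (qt d r.1 S).card = l := fun r => by
    rw [card_qt _ hd, hbal r.1 r.2]
  by_cases hS : S = Finset.range S.card
  · rw [if_pos hS]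
    have hall := (eq_range_iff hd hbal).mp (hcard ▸ hS)
    have hprod : ∀ r : Fin d,
        (if qt d r.1 S = Finset.range (qt d r.1 S).card then (1 : ℤ) else 0) = 1 := by
      intro r
      rw [if_pos (by rw [hqcard r]; exact hall r.1 r.2)]
    rw [Finset.prod_congr rfl (fun r _ => hprod r), Finset.prod_const_one]
    rw [← hS, (Even.add_self _).neg_one_pow, mul_one]
  · rw [if_neg hS]
    have : ∃ r : Fin d, qt d r.1 S ≠ Finset.range (qt d r.1 S).card := by
      by_contra hno
      push_neg at hno
      apply hS
      rw [hcard]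
      rw [eq_range_iff hd hbal]
      intro r hr
      have := hno ⟨r, hr⟩
      rwa [hqcard ⟨r, hr⟩] at this
    obtain ⟨r, hrne⟩ := this
    rw [Finset.prod_eq_zero (Finset.mem_univ r)
      (if_neg hrne : (if qt d r.1 S = Finset.range (qt d r.1 S).card then (1:ℤ) else 0) = 0),
      mul_zero]

lemma sel_nil_right {α : Type*} [DecidableEq α] (r : α) (as : List α) : sel r as [] = [] := by
  cases as <;> rfl

lemma sel_cons {α : Type*} [DecidableEq α] (r a : α) (as : List α) (k : ℕ) (ks : List ℕ) :
    sel r (a :: as) (k :: ks) = if a = r then k :: sel r as ks else sel r as ks := rfl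

lemma ofFn_cons {β : Type*} {m : ℕ} (a : β) (f' : Fin m → β) :
    List.ofFn (Fin.cons a f' : Fin (m + 1) → β) = a :: List.ofFn f' := by
  rw [List.ofFn_succ]
  simp

theorem main (d : ℕ) (hd : 0 < d) (L : List ℕ) :
    ∀ (S : Finset ℕ) (l : ℕ), (∀ r < d, (S.filter (fun s => s % d = r)).card = l) →
    MNchar S (L.map (d * ·)) =
      (-1) ^ (invP d S + invP d (Finset.range S.card)) *
        ∑ f : Fin L.length → Fin d, ∏ r : Fin d,
          MNchar (qt d r.1 S) (sel r (List.ofFn f) L) := by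
  induction L with
  | nil =>
    intro S l hbal
    simp only [List.map_nil, List.length_nil, MNchar_nil]
    rw [Fintype.sum_unique]
    simp only [sel_nil_right, MNchar_nil]
    exact base_case hd hbal
  | cons k rest ih =>
    intro S l hbal
    set m := rest.length with hm
    set E : ℕ := invP d S + invP d (Finset.range S.card) with hE
    -- the common normal form pieces
    set Mv : Fin d → ℕ → (Fin m → Fin d) → ℤ := fun r u f' =>
      MNchar (insert (u - k) ((qt d r.1 S).erase u)) (sel r (List.ofFn f') rest) *
        ∏ r' ∈ Finset.univ \ {r}, MNchar (qt d r'.1 S) (sel r' (List.ofFn f') rest)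
      with hMv
    set qc : Fin d → ℕ → ℕ := fun r u =>
      ((qt d r.1 S).filter fun w => u - k < w ∧ w < u).card with hqc
    -- LHS transformation
    have lhs_eq : MNchar S ((k :: rest).map (d * ·)) =
        (-1) ^ E * ∑ r : Fin d,
          ∑ u ∈ (qt d r.1 S).filter (fun u => k ≤ u ∧ u - k ∉ qt d r.1 S),
            ((-1) ^ qc r u * ∑ f' : Fin m → Fin d, Mv r u f') := by
      rw [List.map_cons, MNchar_cons]
      rw [← Finset.sum_fiberwise_of_maps_to
        (g := fun s => s % d) (t := Finset.range d)
        (fun x _ => Finset.mem_range.mpr (Nat.mod_lt x hd))]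
      rw [← Fin.sum_univ_eq_sum_range (fun rn =>
        ∑ s ∈ (S.filter (fun s => d * k ≤ s ∧ s - d * k ∉ S)).filter (fun s => s % d = rn),
          (-1 : ℤ) ^ (S.filter (fun t => s - d * k < t ∧ t < s)).card *
            MNchar (insert (s - d * k) (S.erase s)) (rest.map (d * ·))) d]
      rw [Finset.mul_sum]
      apply Finset.sum_congr rfl
      intro r _
      rw [Finset.filter_filter, filt_res_eq hd r.2, Finset.sum_image
        (fun x _ y _ h => (dqr_inj r.2).1 h)]
      rw [Finset.mul_sum]
      apply Finset.sum_congr rfl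
      intro u hu
      obtain ⟨hu1, hu2, hu3⟩ := Finset.mem_filter.mp hu
      have hmem : d * u + r.1 ∈ S := (mem_qt r.2).mp hu1
      have hks : d * k ≤ d * u + r.1 := (dqr_le r.2).mpr hu2
      have hsub : d * u + r.1 - d * k = d * (u - k) + r.1 := sub_dqr r.2 hu2
      have hnkS : d * u + r.1 - d * k ∉ S := by
        rw [hsub]
        intro hmm
        exact hu3 ((mem_qt r.2).mpr hmm)
      have hbal' := bal_move hd r.2 hbal hmem hu2 hu3
      have hcard' : (insert (d * u + r.1 - d * k) (S.erase (d * u + r.1))).card = S.card :=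
        card_move hmem hnkS
      rw [ih _ l hbal', hcard']
      -- split the product over residues
      have hprod : ∀ f' : Fin m → Fin d,
          (∏ r' : Fin d, MNchar (qt d r'.1 (insert (d * u + r.1 - d * k) (S.erase (d * u + r.1))))
            (sel r' (List.ofFn f') rest)) = Mv r u f' := by
        intro f'
        rw [Finset.prod_eq_mul_prod_sdiff_singleton_of_mem (Finset.mem_univ r)]
        rw [hMv]
        congr 1
        · rw [qt_move_same hd r.2 hu2]
        · apply Finset.prod_congr rfl
          intro r' hr'
          have hne : r' ≠ r := by
            intro hh
            simp [hh] at hr'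
          rw [qt_move_other hd r.2 r'.2 (fun hh => hne (Fin.ext hh)) hu2]
      rw [Finset.sum_congr rfl (fun f' _ => hprod f')]
      -- sign bookkeeping
      have hsign := sign_lemma (k := d * k) hd (Dvd.intro k rfl) hmem hks hnkS
      have hmodv : (d * u + r.1) % d = r.1 := dqr_mod u r.2
      have hcsame : (S.filter fun t =>
          (d * u + r.1 - d * k < t ∧ t < d * u + r.1) ∧ t % d = (d * u + r.1) % d).card =
          qc r u := by
        rw [hmodv, hqc]
        exact csame_eq_qcross hd r.2 hu2
      rw [hcsame] at hsign
      have hpow : (-1 : ℤ) ^ (S.filter fun t => d * u + r.1 - d * k < t ∧ t < d * u + r.1).card *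
          (-1) ^ (invP d (insert (d * u + r.1 - d * k) (S.erase (d * u + r.1))) +
            invP d (Finset.range S.card)) =
          (-1) ^ E * (-1) ^ qc r u := by
        rw [← pow_add, ← pow_add]
        apply neg_one_pow_congr'
        have h2 : (invP d S + invP d (insert (d * u + r.1 - d * k) (S.erase (d * u + r.1)))) % 2 =
            ((S.filter fun t => d * u + r.1 - d * k < t ∧ t < d * u + r.1).card + qc r u) % 2 :=
          hsign
        rw [hE]
        omega
      rw [← mul_assoc, hpow, mul_assoc]
    -- RHS transformation
    have rhs_eq : ∑ f : Fin (k :: rest).length → Fin d, ∏ r : Fin d,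
          MNchar (qt d r.1 S) (sel r (List.ofFn f) (k :: rest)) =
        ∑ r : Fin d,
          ∑ u ∈ (qt d r.1 S).filter (fun u => k ≤ u ∧ u - k ∉ qt d r.1 S),
            ((-1) ^ qc r u * ∑ f' : Fin m → Fin d, Mv r u f') := by
      simp only [List.length_cons]
      rw [← Equiv.sum_comp (Fin.consEquiv (fun _ : Fin (m + 1) => Fin d))
        (fun f => ∏ r : Fin d, MNchar (qt d r.1 S) (sel r (List.ofFn f) (k :: rest)))]
      rw [Fintype.sum_prod_type]
      apply Finset.sum_congr rfl
      intro a _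
      have hstep : ∀ f' : Fin m → Fin d,
          (∏ r : Fin d, MNchar (qt d r.1 S)
            (sel r (List.ofFn ((Fin.consEquiv (fun _ : Fin (m + 1) => Fin d)) (a, f')))
              (k :: rest))) =
          MNchar (qt d a.1 S) (k :: sel a (List.ofFn f') rest) *
            ∏ r' ∈ Finset.univ \ {a}, MNchar (qt d r'.1 S) (sel r' (List.ofFn f') rest) := by
        intro f'
        have hc : List.ofFn ((Fin.consEquiv (fun _ : Fin (m + 1) => Fin d)) (a, f')) =
            a :: List.ofFn f' := ofFn_cons a f'
        rw [hc]
        rw [Finset.prod_eq_mul_prod_sdiff_singleton_of_mem (Finset.mem_univ a)]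
        congr 1
        · rw [sel_cons, if_pos rfl]
        · apply Finset.prod_congr rfl
          intro r' hr'
          have hne : a ≠ r' := by
            intro hh
            simp [hh] at hr'
          rw [sel_cons, if_neg hne]
      rw [Finset.sum_congr rfl (fun f' _ => hstep f')]
      calc ∑ f' : Fin m → Fin d,
            (MNchar (qt d a.1 S) (k :: sel a (List.ofFn f') rest) *
              ∏ r' ∈ Finset.univ \ {a}, MNchar (qt d r'.1 S) (sel r' (List.ofFn f') rest))
          = ∑ f' : Fin m → Fin d,
              ∑ u ∈ (qt d a.1 S).filter (fun u => k ≤ u ∧ u - k ∉ qt d a.1 S),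
              ((-1) ^ qc a u * Mv a u f') := by
            apply Finset.sum_congr rfl
            intro f' _
            rw [MNchar_cons, Finset.sum_mul]
            apply Finset.sum_congr rfl
            intro u _
            exact mul_assoc _ _ _
        _ = ∑ u ∈ (qt d a.1 S).filter (fun u => k ≤ u ∧ u - k ∉ qt d a.1 S),
              ∑ f' : Fin m → Fin d, ((-1) ^ qc a u * Mv a u f') := Finset.sum_comm
        _ = ∑ u ∈ (qt d a.1 S).filter (fun u => k ≤ u ∧ u - k ∉ qt d a.1 S),
              ((-1) ^ qc a u * ∑ f' : Fin m → Fin d, Mv a u f') := by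
            apply Finset.sum_congr rfl
            intro u _
            rw [Finset.mul_sum]
    rw [lhs_eq, rhs_eq]

lemma orbit_dvd {m d : ℕ} (T : (Fin m → Fin d) → ℤ)
    (hT : ∀ (σ : Equiv.Perm (Fin d)) (f : Fin m → Fin d), T (⇑σ ∘ f) = T f) :
    ∀ A : Finset (Fin m → Fin d), (∀ f ∈ A, Function.Surjective f) →
      (∀ (σ : Equiv.Perm (Fin d)) (f : Fin m → Fin d), f ∈ A → ⇑σ ∘ f ∈ A) →
      ((d.factorial : ℤ)) ∣ ∑ f ∈ A, T f := by
  intro A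
  induction A using Finset.strongInduction with
  | _ A ihA =>
    intro hsurj hclosed
    rcases A.eq_empty_or_nonempty with rfl | ⟨f₀, hf₀⟩
    · simp
    · set O : Finset (Fin m → Fin d) :=
        (Finset.univ : Finset (Equiv.Perm (Fin d))).image (fun σ : Equiv.Perm (Fin d) => ⇑σ ∘ f₀) with hO
      have hOA : O ⊆ A := by
        intro g hg
        rw [hO] at hg
        obtain ⟨σ, _, rfl⟩ := Finset.mem_image.mp hg
        exact hclosed σ f₀ hf₀
      have hf₀O : f₀ ∈ O := by
        rw [hO]
        exact Finset.mem_image.mpr ⟨1, Finset.mem_univ _, by ext x; rfl⟩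
      have hcardO : O.card = d.factorial := by
        rw [hO, Finset.card_image_of_injective _ ?_, Finset.card_univ, Fintype.card_perm,
          Fintype.card_fin]
        intro σ τ hστ
        ext x
        obtain ⟨y, hy⟩ := hsurj f₀ hf₀ x
        have := congrFun hστ y
        simp only [Function.comp_apply] at this
        rw [← hy, this]
      have hsplit : ∑ f ∈ A, T f = ∑ f ∈ A \ O, T f + ∑ f ∈ O, T f :=
        (Finset.sum_sdiff hOA).symm
      have hOsum : ∑ f ∈ O, T f = (d.factorial : ℤ) * T f₀ := by
        have hconst : ∀ g ∈ O, T g = T f₀ := by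
          intro g hg
          rw [hO] at hg
          obtain ⟨σ, _, rfl⟩ := Finset.mem_image.mp hg
          exact hT σ f₀
        rw [Finset.sum_congr rfl hconst, Finset.sum_const, hcardO]
        simp
      have hrest : (d.factorial : ℤ) ∣ ∑ f ∈ A \ O, T f := by
        apply ihA (A \ O) (Finset.sdiff_ssubset hOA ⟨f₀, hf₀O⟩)
        · intro f hf
          exact hsurj f (Finset.mem_sdiff.mp hf).1
        · intro σ f hf
          obtain ⟨hfA, hfO⟩ := Finset.mem_sdiff.mp hf
          rw [Finset.mem_sdiff]
          refine ⟨hclosed σ f hfA, ?_⟩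
          intro hmem
          apply hfO
          rw [hO] at hmem ⊢
          obtain ⟨τ, _, hτ⟩ := Finset.mem_image.mp hmem
          refine Finset.mem_image.mpr ⟨σ⁻¹ * τ, Finset.mem_univ _, ?_⟩
          ext x
          have := congrFun hτ x
          simp only [Function.comp_apply] at this ⊢
          rw [Equiv.Perm.mul_apply, this]
          simp
      rw [hsplit]
      exact dvd_add hrest ⟨T f₀, hOsum⟩

lemma sel_nil_left {α : Type*} [DecidableEq α] (r : α) (ks : List ℕ) : sel r [] ks = [] := by
  cases ks <;> rfl

lemma sel_map_perm {d : ℕ} (σ : Equiv.Perm (Fin d)) (r : Fin d) (as : List (Fin d))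
    (ks : List ℕ) : sel r (as.map σ) ks = sel (σ⁻¹ r) as ks := by
  induction as generalizing ks with
  | nil => rw [List.map_nil, sel_nil_left, sel_nil_left]
  | cons a as ihs =>
    cases ks with
    | nil => rw [sel_nil_right, sel_nil_right]
    | cons k ks =>
      simp only [List.map_cons, sel_cons]
      have hiff : (σ a = r) ↔ (a = σ⁻¹ r) := by
        constructor
        · intro h; rw [← h]; simp
        · intro h; rw [h]; simp
      rw [if_congr hiff rfl rfl, ihs]

lemma sel_eq_nil_of_not_mem {α : Type*} [DecidableEq α] (r : α) (as : List α) (ks : List ℕ)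
    (h : r ∉ as) : sel r as ks = [] := by
  induction as generalizing ks with
  | nil => exact sel_nil_left r ks
  | cons a as ihs =>
    cases ks with
    | nil => rw [sel_nil_right]
    | cons k ks =>
      rw [sel_cons, if_neg (fun hh => h (by rw [← hh]; exact List.mem_cons_self)), ihs]
      intro hh
      exact h (List.mem_cons_of_mem a hh)

lemma dvd_fsum (d : ℕ) (hd : 0 < d) (B : Finset ℕ) (hB0 : MNchar B [] = 0) (L : List ℕ) :
    (d.factorial : ℤ) ∣
      ∑ f : Fin L.length → Fin d, ∏ r : Fin d, MNchar B (sel r (List.ofFn f) L) := by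
  set T : (Fin L.length → Fin d) → ℤ :=
    fun f => ∏ r : Fin d, MNchar B (sel r (List.ofFn f) L) with hT
  have hTinv : ∀ (σ : Equiv.Perm (Fin d)) (f : Fin L.length → Fin d), T (⇑σ ∘ f) = T f := by
    intro σ f
    rw [hT]
    simp only
    have h1 : ∀ r : Fin d, sel r (List.ofFn (⇑σ ∘ f)) L = sel (σ⁻¹ r) (List.ofFn f) L := by
      intro r
      have : List.ofFn (⇑σ ∘ f) = (List.ofFn f).map ⇑σ := by
        rw [List.map_ofFn]
      rw [this, sel_map_perm]
    rw [Finset.prod_congr rfl (fun r _ => by rw [h1 r])]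
    exact Equiv.prod_comp (σ⁻¹ : Equiv.Perm (Fin d))
      (fun r => MNchar B (sel r (List.ofFn f) L))
  rw [← Finset.sum_filter_add_sum_filter_not Finset.univ (fun f => Function.Surjective f) T]
  have hzero : ∑ f ∈ Finset.univ.filter (fun f => ¬ Function.Surjective f), T f = 0 := by
    apply Finset.sum_eq_zero
    intro f hf
    have hns := (Finset.mem_filter.mp hf).2
    rw [Function.Surjective] at hns
    push_neg at hns
    obtain ⟨r₀, hr₀⟩ := hns
    have hnotmem : r₀ ∉ List.ofFn f := by
      rw [List.mem_ofFn]
      rintro ⟨i, hi⟩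
      exact hr₀ i hi
    rw [hT]
    simp only
    apply Finset.prod_eq_zero (Finset.mem_univ r₀)
    rw [sel_eq_nil_of_not_mem _ _ _ hnotmem, hB0]
  rw [hzero, add_zero]
  apply orbit_dvd T hTinv
  · intro f hf
    exact (Finset.mem_filter.mp hf).2
  · intro σ f hf
    rw [Finset.mem_filter] at hf ⊢
    exact ⟨Finset.mem_univ _, σ.surjective.comp hf.2⟩


lemma sorted_replicate (n : ℕ) (x : ℕ) : (List.replicate n x).Pairwise (· ≤ ·) := by
  induction n with
  | zero => simp
  | succ n ihn =>
    rw [List.replicate_succ, List.pairwise_cons]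
    exact ⟨fun b hb => le_of_eq (List.eq_of_mem_replicate hb).symm, ihn⟩

lemma sorted_bind {d : ℕ} (g : ℕ → ℕ) (hg : Monotone g) :
    ∀ l : List ℕ, l.Pairwise (· ≤ ·) →
      (l.flatMap fun p => List.replicate d (g p)).Pairwise (· ≤ ·) := by
  intro l
  induction l with
  | nil => intro _; simp
  | cons a l ihl =>
    intro hl
    rw [List.pairwise_cons] at hl
    rw [List.flatMap_cons]
    apply List.pairwise_append.mpr
    refine ⟨sorted_replicate d (g a), ihl hl.2, ?_⟩
    intro x hx y hy
    rw [List.eq_of_mem_replicate hx]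
    rw [List.mem_flatMap] at hy
    obtain ⟨p, hp, hyp⟩ := hy
    rw [List.eq_of_mem_replicate hyp]
    exact hg (hl.1 p hp)

lemma sort_dilate (d : ℕ) (P : Multiset ℕ) :
    (dilate d P).sort (· ≤ ·) = (P.sort (· ≤ ·)).flatMap fun p => List.replicate d (d * p) := by
  have hperm : ((dilate d P).sort (· ≤ ·)).Perm
      ((P.sort (· ≤ ·)).flatMap fun p => List.replicate d (d * p)) := by
    apply Multiset.coe_eq_coe.mp
    rw [Multiset.sort_eq]
    unfold dilate
    conv_lhs => rw [← Multiset.sort_eq P (· ≤ ·)]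
    rw [show (fun p => Multiset.replicate d (d * p)) =
        fun p => ((List.replicate d (d * p) : List ℕ) : Multiset ℕ) from
      funext fun p => (Multiset.coe_replicate _ _).symm]
    exact Multiset.coe_bind _ _
  exact List.Perm.eq_of_pairwise' (Multiset.pairwise_sort _ _)
    (sorted_bind _ (fun a b hab => Nat.mul_le_mul_left d hab) _ (Multiset.pairwise_sort _ _)) hperm

lemma len_bind {d : ℕ} (g : ℕ → ℕ) (l : List ℕ) :
    (l.flatMap fun p => List.replicate d (g p)).length = d * l.length := by
  induction l with
  | nil => simp
  | cons a l ihl =>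
    rw [List.flatMap_cons, List.length_append, List.length_replicate, ihl, List.length_cons,
      Nat.mul_succ]
    omega

lemma getD_bind {d : ℕ} (hd : 0 < d) (g : ℕ → ℕ) :
    ∀ (l : List ℕ) (j : ℕ), j < d * l.length →
      (l.flatMap fun p => List.replicate d (g p)).getD j 0 = g (l.getD (j / d) 0) := by
  intro l
  induction l with
  | nil => intro j hj; simp at hj
  | cons a l ihl =>
    intro j hj
    rw [List.flatMap_cons]
    by_cases hjd : j < d
    · rw [List.getD_append _ _ _ _ (by rw [List.length_replicate]; exact hjd)]
      rw [Nat.div_eq_of_lt hjd]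
      have h1 : (List.replicate d (g a)).getD j 0 = g a := by
        rw [List.getD_eq_getElem _ _ (by rw [List.length_replicate]; exact hjd)]
        exact List.getElem_replicate _
      rw [h1]
      rfl
    · push_neg at hjd
      obtain ⟨e, rfl⟩ : ∃ e, j = e + d := ⟨j - d, by omega⟩
      rw [List.getD_append_right _ _ _ _ (by rw [List.length_replicate]; omega)]
      rw [List.length_replicate]
      have he : e + d - d = e := by omega
      rw [he]
      have hlen : e < d * l.length := by
        rw [List.length_cons, Nat.mul_succ] at hj
        omega
      rw [ihl e hlen]
      rw [Nat.add_div_right e hd, List.getD_cons_succ]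

lemma mem_betaSet {P : Multiset ℕ} {x : ℕ} :
    x ∈ betaSet P ↔ ∃ i < (P.sort (· ≤ ·)).length, x = (P.sort (· ≤ ·)).getD i 0 + i := by
  unfold betaSet
  rw [List.mem_toFinset, List.mem_map]
  constructor
  · rintro ⟨i, hi, rfl⟩
    exact ⟨i, List.mem_range.mp hi, rfl⟩
  · rintro ⟨i, hi, rfl⟩
    exact ⟨i, List.mem_range.mpr hi, rfl⟩

lemma qt_betaSet_dilate {d r : ℕ} (hd : 0 < d) (hr : r < d) (P : Multiset ℕ) :
    qt d r (betaSet (dilate d P)) = betaSet P := by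
  ext q
  rw [mem_qt hr, mem_betaSet, mem_betaSet]
  rw [sort_dilate]
  constructor
  · rintro ⟨j, hj, hval⟩
    rw [len_bind] at hj
    rw [getD_bind hd _ _ _ hj] at hval
    set i := j / d with hi
    set ρ := j % d with hρ
    have hjd : j = d * i + ρ := (Nat.div_add_mod j d).symm
    have hρd : ρ < d := Nat.mod_lt j hd
    have hval2 : d * q + r = d * ((P.sort (· ≤ ·)).getD i 0 + i) + ρ := by
      rw [hval, Nat.mul_add]
      omega
    have hres : r = ρ := by
      have h1 := dqr_mod q hr
      have h2 := dqr_mod ((P.sort (· ≤ ·)).getD i 0 + i) hρd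
      rw [hval2] at h1
      rw [h2] at h1
      omega
    rw [← hres] at hval2
    have hq : q = (P.sort (· ≤ ·)).getD i 0 + i := (dqr_inj hr).mp hval2
    refine ⟨i, ?_, hq⟩
    by_contra hiL
    push_neg at hiL
    have := Nat.mul_le_mul_left d hiL
    omega
  · rintro ⟨i, hi, rfl⟩
    refine ⟨d * i + r, ?_, ?_⟩
    · rw [len_bind]
      have h2 : d * (i + 1) ≤ d * (P.sort (· ≤ ·)).length := Nat.mul_le_mul_left d hi
      rw [Nat.mul_add] at h2
      omega
    · rw [getD_bind hd _ _ _ (by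
        have h2 : d * (i + 1) ≤ d * (P.sort (· ≤ ·)).length := Nat.mul_le_mul_left d hi
        rw [Nat.mul_add] at h2
        omega)]
      rw [dqr_div i hr, Nat.mul_add]
      omega

lemma bal_betaSet_dilate {d : ℕ} (hd : 0 < d) (P : Multiset ℕ) :
    ∀ r < d, ((betaSet (dilate d P)).filter (fun s => s % d = r)).card = (betaSet P).card := by
  intro r hr
  rw [← card_qt _ hd, qt_betaSet_dilate hd hr]

lemma sort_dilate_map (d : ℕ) (mu : Multiset ℕ) :
    (dilate d mu).sort (· ≤ ·) =
      ((mu.sort (· ≤ ·)).flatMap (List.replicate d)).map (fun x => d * x) := by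
  rw [sort_dilate, List.map_flatMap]
  congr 1
  funext p
  rw [List.map_replicate]

lemma beta_nil_zero {lam : Multiset ℕ} (hpos : ∀ p ∈ lam, 0 < p) (hne : lam ≠ 0) :
    MNchar (betaSet lam) [] = 0 := by
  rw [MNchar_nil]
  have hlen : 0 < (lam.sort (· ≤ ·)).length := by
    rw [Multiset.length_sort]
    exact Multiset.card_pos.mpr (fun h => hne h)
  have h0 : 0 ∉ betaSet lam := by
    intro h
    rw [mem_betaSet] at h
    obtain ⟨i, hi, hval⟩ := h
    have hleni : i = 0 := by omega
    subst hleni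
    have hget : (lam.sort (· ≤ ·)).getD 0 0 ∈ lam.sort (· ≤ ·) := by
      rw [List.getD_eq_getElem _ _ hlen]
      exact List.getElem_mem _
    rw [Multiset.mem_sort] at hget
    have := hpos _ hget
    omega
  have hbne : (betaSet lam).Nonempty := by
    refine ⟨(lam.sort (· ≤ ·)).getD 0 0 + 0, ?_⟩
    rw [mem_betaSet]
    exact ⟨0, hlen, rfl⟩
  rw [if_neg]
  intro heq
  apply h0
  rw [heq]
  rw [Finset.mem_range]
  exact Finset.card_pos.mpr hbne


/-- Miller, Theorem 1, (1): for partitions λ, μ of a positive integer n,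
the character value χ_𝝀(𝝁) at the d-fold dilated shapes is divisible by d!. -/
theorem chi_dilate_dilate_dvd (d n : ℕ) (hd : 0 < d) (hn : 0 < n)
    (lam mu : Multiset ℕ) (hlam : IsPartitionOf n lam) (hmu : IsPartitionOf n mu) :
    (d.factorial : ℤ) ∣ chi (dilate d lam) (dilate d mu) := by
  have hlamne : lam ≠ 0 := by
    intro h
    rw [h] at hlam
    have := hlam.2
    simp at this
    omega
  have hB0 : MNchar (betaSet lam) [] = 0 := beta_nil_zero hlam.1 hlamne
  unfold chi
  rw [sort_dilate_map]
  rw [main d hd _ (betaSet (dilate d lam)) (betaSet lam).card (bal_betaSet_dilate hd lam)]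
  have hqt : ∀ r : Fin d, qt d r.1 (betaSet (dilate d lam)) = betaSet lam :=
    fun r => qt_betaSet_dilate hd r.2 lam
  have hsum : ∀ f : Fin ((mu.sort (· ≤ ·)).flatMap (List.replicate d)).length → Fin d,
      (∏ r : Fin d, MNchar (qt d r.1 (betaSet (dilate d lam)))
        (sel r (List.ofFn f) ((mu.sort (· ≤ ·)).flatMap (List.replicate d)))) =
      ∏ r : Fin d, MNchar (betaSet lam)
        (sel r (List.ofFn f) ((mu.sort (· ≤ ·)).flatMap (List.replicate d))) := by
    intro f
    exact Finset.prod_congr rfl (fun r _ => by rw [hqt r])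
  rw [Finset.sum_congr rfl (fun f _ => hsum f)]
  exact Dvd.dvd.mul_left (dvd_fsum d hd (betaSet lam) hB0 _) _
end

section
/- For any two partitions λ and μ of a positive integer n not divisible by d, the character value χ_𝝀(d².μ) equals 0, where d².μ is obtained by multiplying every part of μ by d² and 𝝀 is the d-fold dilation of λ. -/
/-! ### Auxiliary lemmas for the proof -/

/-- The invariant: sum of `s / d mod d` over the beta-set. -/
def Hinv (d : ℕ) (S : Finset ℕ) : ℕ := ∑ s ∈ S, (s / d % d)

lemma Hinv_term (d k s : ℕ) (hd : 0 < d) (hks : k ≤ s) (hdk : d ^ 2 ∣ k) :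
    (s - k) / d % d = s / d % d := by
  obtain ⟨t, rfl⟩ := hdk
  have h1 : s = (s - d ^ 2 * t) + d * (d * t) := by ring_nf; omega
  conv_rhs => rw [h1]
  rw [Nat.add_mul_div_left _ _ hd, Nat.add_mul_mod_self_left]

lemma MNchar_eq_zero (d : ℕ) (hd : 0 < d) : ∀ (L : List ℕ) (S : Finset ℕ),
    (∀ k ∈ L, d ^ 2 ∣ k) → Hinv d S ≠ Hinv d (Finset.range S.card) → MNchar S L = 0
  | [], S, _, hne => by
      rw [MNchar, if_neg]
      intro h
      exact hne (by rw [← h])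
  | k :: rest, S, hdvd, hne => by
      rw [MNchar]
      apply Finset.sum_eq_zero
      intro s hs
      simp only [Finset.mem_filter] at hs
      obtain ⟨hsS, hks, hnot⟩ := hs
      have h1 : s - k ∉ S.erase s := fun h => hnot (Finset.mem_of_mem_erase h)
      have hcard : (insert (s - k) (S.erase s)).card = S.card := by
        rw [Finset.card_insert_of_notMem h1, Finset.card_erase_of_mem hsS]
        have : 0 < S.card := Finset.card_pos.2 ⟨s, hsS⟩
        omega
      have hH : Hinv d (insert (s - k) (S.erase s)) = Hinv d S := by
        rw [Hinv, Finset.sum_insert h1, Hinv_term d k s hd hks (hdvd k (by simp))]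
        exact Finset.add_sum_erase S (fun s => s / d % d) hsS
      rw [MNchar_eq_zero d hd rest _ (fun j hj => hdvd j (List.mem_cons_of_mem _ hj))
        (by rw [hH, hcard]; exact hne), mul_zero]

lemma sorted_flatMap_rep (d : ℕ) : ∀ (l : List ℕ), l.Pairwise (· ≤ ·) →
    (l.flatMap fun p => List.replicate d (d * p)).Pairwise (· ≤ ·)
  | [], _ => by simp
  | p :: l, h => by
      rw [List.flatMap_cons, List.pairwise_append]
      refine ⟨List.pairwise_replicate.2 (Or.inr le_rfl), sorted_flatMap_rep d l h.of_cons, ?_⟩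
      intro a ha b hb
      obtain ⟨q, hq, hbq⟩ := List.mem_flatMap.1 hb
      rw [List.eq_of_mem_replicate ha, List.eq_of_mem_replicate hbq]
      exact Nat.mul_le_mul_left d (List.rel_of_pairwise_cons h hq)

lemma list_sum_range (f : ℕ → ℕ) : ∀ n, ((List.range n).map f).sum = ∑ i ∈ Finset.range n, f i
  | 0 => by simp
  | n + 1 => by
      rw [List.range_succ, Finset.sum_range_succ, List.map_append, List.sum_append,
        list_sum_range f n]
      simp

lemma reindex (d m : ℕ) (hd : 0 < d) (F : ℕ → ℕ) :
    ∑ i ∈ Finset.range (d * m), F (i / d) = d * ∑ j ∈ Finset.range m, F j := by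
  induction m with
  | zero => simp
  | succ m ih =>
      rw [Nat.mul_succ, Finset.sum_range_add, ih, Finset.sum_range_succ]
      have : ∀ r ∈ Finset.range d, F ((d * m + r) / d) = F m := by
        intro r hr
        rw [Nat.mul_add_div hd, Nat.div_eq_of_lt (Finset.mem_range.1 hr)]
        simp
      rw [Finset.sum_congr rfl this, Finset.sum_const, Finset.card_range, smul_eq_mul,
        Nat.mul_add, Nat.mul_comm d (F m)]

lemma sum_range_getD : ∀ (l : List ℕ), ∑ i ∈ Finset.range l.length, l.getD i 0 = l.sum
  | [] => by simp
  | a :: l => by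
      rw [List.length_cons, Finset.sum_range_succ', List.sum_cons]
      simp only [List.getD_cons_succ, List.getD_cons_zero]
      rw [sum_range_getD l, Nat.add_comm]

lemma getD_flatMap_rep (d : ℕ) (hd : 0 < d) : ∀ (l : List ℕ) (i : ℕ), i < d * l.length →
    (l.flatMap fun p => List.replicate d (d * p)).getD i 0 = d * l.getD (i / d) 0
  | [], i, h => by simp at h
  | p :: l, i, h => by
      rw [List.flatMap_cons]
      by_cases hi : i < d
      · rw [List.getD_append _ _ _ _ (by simpa using hi), Nat.div_eq_of_lt hi,
          List.getD_cons_zero]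
        rw [List.getD_eq_getElem _ _ (by simpa using hi), List.getElem_replicate]
      · rw [List.getD_append_right _ _ _ _ (by simpa using not_lt.1 hi)]
        rw [List.length_replicate]
        have hid := not_lt.1 hi
        have hlen : i - d < d * l.length := by
          rw [List.length_cons, Nat.mul_succ] at h; omega
        rw [getD_flatMap_rep d hd l (i - d) hlen]
        have : i / d = (i - d) / d + 1 := by
          rw [Nat.div_eq_sub_div hd (not_lt.1 hi)]
        rw [this, List.getD_cons_succ]

lemma Hinv_ne (d n : ℕ) (hd : 0 < d) (hdn : ¬ d ∣ n) (lam : Multiset ℕ)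
    (hlam : IsPartitionOf n lam) :
    Hinv d (betaSet (dilate d lam)) ≠ Hinv d (Finset.range (betaSet (dilate d lam)).card) := by
  set s : List ℕ := lam.sort (· ≤ ·) with hs
  set m : ℕ := s.length with hm
  set lb : List ℕ := s.flatMap (fun p => List.replicate d (d * p)) with hlb
  have hsorted : lb.Pairwise (· ≤ ·) := sorted_flatMap_rep d s (Multiset.pairwise_sort _ _)
  have hsort : (dilate d lam).sort (· ≤ ·) = lb := sort_dilate d lam
  have hlen : lb.length = d * m := by
    rw [hlb, List.length_flatMap]
    simp only [Function.comp_def, List.length_replicate, List.map_const', List.sum_replicate,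
      smul_eq_mul]
    rw [Nat.mul_comm]
  have hmono : ∀ i j, i < j → j < lb.length → lb.getD i 0 ≤ lb.getD j 0 := by
    intro i j hij hj
    rw [List.getD_eq_getElem _ _ (lt_trans hij hj), List.getD_eq_getElem _ _ hj]
    exact List.pairwise_iff_get.1 hsorted ⟨i, lt_trans hij hj⟩ ⟨j, hj⟩ hij
  set g : ℕ → ℕ := fun i => lb.getD i 0 + i with hg
  have hginj : ∀ i ∈ List.range lb.length, ∀ j ∈ List.range lb.length, g i = g j → i = j := by
    intro i hi j hj hgij
    rw [List.mem_range] at hi hj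
    rcases lt_trichotomy i j with h | h | h
    · have := hmono i j h hj; simp only [hg] at hgij; omega
    · exact h
    · have := hmono j i h hi; simp only [hg] at hgij; omega
  have hnodup : ((List.range lb.length).map g).Nodup :=
    List.nodup_range.map_on hginj
  have hbeta : betaSet (dilate d lam) = ((List.range lb.length).map g).toFinset := by
    rw [betaSet, hsort]
  have hcard : (betaSet (dilate d lam)).card = d * m := by
    rw [hbeta, List.toFinset_card_of_nodup hnodup, List.length_map, List.length_range, hlen]
  have hHinit : Hinv d (betaSet (dilate d lam))
      = d * ∑ j ∈ Finset.range m, ((j + s.getD j 0) % d) := by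
    rw [Hinv, hbeta, List.sum_toFinset _ hnodup, List.map_map, list_sum_range, hlen]
    rw [← reindex d m hd (fun j => (j + s.getD j 0) % d)]
    apply Finset.sum_congr rfl
    intro i hi
    rw [Finset.mem_range] at hi
    simp only [Function.comp, hg]
    rw [getD_flatMap_rep d hd s i hi]
    rw [Nat.add_comm (d * s.getD (i / d) 0) i, Nat.add_mul_div_left _ _ hd]
  have hHfin : Hinv d (Finset.range (d * m)) = d * ∑ j ∈ Finset.range m, (j % d) := by
    rw [Hinv, ← reindex d m hd (fun j => j % d)]
  intro heq
  rw [hHinit, hcard, hHfin] at heq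
  have heq2 : ∑ j ∈ Finset.range m, ((j + s.getD j 0) % d)
      = ∑ j ∈ Finset.range m, (j % d) := Nat.eq_of_mul_eq_mul_left hd heq
  have hsum : ∑ j ∈ Finset.range m, s.getD j 0 = n := by
    rw [hm, sum_range_getD]
    have : (↑s : Multiset ℕ) = lam := Multiset.sort_eq _ _
    rw [← hlam.2, ← this]
    rfl
  have hmod : (n + ∑ j ∈ Finset.range m, j) % d = (0 + ∑ j ∈ Finset.range m, j) % d := by
    rw [Nat.zero_add]
    calc (n + ∑ j ∈ Finset.range m, j) % d
        = (∑ j ∈ Finset.range m, (j + s.getD j 0)) % d := by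
          rw [Finset.sum_add_distrib, hsum, Nat.add_comm]
      _ = (∑ j ∈ Finset.range m, ((j + s.getD j 0) % d)) % d := Finset.sum_nat_mod _ _ _
      _ = (∑ j ∈ Finset.range m, (j % d)) % d := by rw [heq2]
      _ = (∑ j ∈ Finset.range m, j) % d := (Finset.sum_nat_mod _ _ _).symm
  exact hdn ((Nat.modEq_zero_iff_dvd).1 (Nat.ModEq.add_right_cancel' _ hmod))

/-- Miller, Theorem 1, (3): for partitions λ, μ of a positive integer n not divisible
by d, χ_𝝀(d².μ) = 0. -/
theorem chi_dilate_scale_sq_eq_zero (d n : ℕ) (hd : 0 < d) (hn : 0 < n) (hdn : ¬ d ∣ n)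
    (lam mu : Multiset ℕ) (hlam : IsPartitionOf n lam) (hmu : IsPartitionOf n mu) :
    chi (dilate d lam) (scale (d ^ 2) mu) = 0 := by
  rw [chi]
  apply MNchar_eq_zero d hd
  · intro k hk
    rw [Multiset.mem_sort] at hk
    obtain ⟨x, -, rfl⟩ := Multiset.mem_map.1 hk
    exact Dvd.intro x rfl
  · exact Hinv_ne d n hd hdn lam hlam
end

section
/- In Comét's correspondence, if β′ is obtained from β by swapping a 0 in position a with a 1 in position b = a + k (a < b), then the number of rows occupied by the removed rim hook sh(β)∖sh(β′) equals the number of 1's in β lying in positions a through b inclusive. -/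
def SwapAt (β β' : List Bool) (a k : ℕ) : Prop :=
  a + k < β.length ∧ β.getD a true = false ∧ β.getD (a + k) false = true ∧
  β' = (β.set a true).set (a + k) false

namespace CometRows

abbrev pb (γ : List Bool) (j : ℕ) : Bool := γ.getD j false

lemma count_true_take (γ : List Bool) (j : ℕ) :
    (γ.take j).count true = ((List.range j).filter (pb γ)).length := by
  induction j with
  | zero => simp
  | succ j ih =>
    rw [List.take_succ, List.range_succ, List.filter_append, List.count_append,
      List.length_append, ih]
    congr 1
    rcases lt_or_ge j γ.length with hj | hj
    · rw [List.getElem?_eq_getElem hj]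
      cases hγ : γ[j] <;>
        simp [pb, List.getD_eq_getElem?_getD, List.getElem?_eq_getElem hj, hγ]
    · simp [pb, List.getElem?_eq_none hj, List.getD_eq_getElem?_getD, List.filter_cons]

lemma count_false_add_true (l : List Bool) : l.count false + l.count true = l.length := by
  induction l with
  | nil => simp
  | cons b l ih => cases b <;> simp [List.count_cons] <;> omega

lemma zerosBefore_eq (γ : List Bool) (j : ℕ) (hj : j ≤ γ.length) :
    zerosBefore γ j = j - ((List.range j).filter (pb γ)).length := by
  have h1 := count_false_add_true (γ.take j)
  have h2 : (γ.take j).length = j := by simp [hj]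
  rw [count_true_take] at h1
  unfold zerosBefore
  omega

lemma zerosBefore_mono (γ : List Bool) {i j : ℕ} (hij : i ≤ j) :
    zerosBefore γ i ≤ zerosBefore γ j := by
  unfold zerosBefore
  have : γ.take i = (γ.take j).take i := by rw [List.take_take, min_eq_left hij]
  rw [this]
  exact (List.take_sublist _ _).count_le _

lemma filter_range_getD (p : ℕ → Bool) (n : ℕ) :
    ∀ i, i < ((List.range n).filter p).length →
      ((List.range (((List.range n).filter p).getD i 0)).filter p).length = i := by
  induction n with
  | zero => simp
  | succ n ih =>
    intro i hi
    rw [List.range_succ, List.filter_append] at hi ⊢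
    rcases lt_or_ge i ((List.range n).filter p).length with h | h
    · rw [List.getD_append _ _ _ _ h]; exact ih i h
    · by_cases hp : p n
      · have hl : (List.filter p [n]) = [n] := by simp [hp]
        rw [hl] at hi ⊢
        rw [List.length_append, List.length_singleton] at hi
        have hie : i = ((List.range n).filter p).length := by omega
        rw [List.getD_append_right _ _ _ _ h, hie]
        simp
      · have hl : (List.filter p [n]) = [] := by simp [hp]
        rw [hl] at hi
        simp at hi
        omega

lemma mem_filter_range {p : ℕ → Bool} {n x : ℕ} (hx : x ∈ (List.range n).filter p) :
    x < n ∧ p x = true := by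
  rw [List.mem_filter, List.mem_range] at hx; exact hx

lemma sorted_filter_range (p : ℕ → Bool) (n : ℕ) :
    List.Pairwise (· < ·) ((List.range n).filter p) :=
  (List.pairwise_lt_range (n := n)).filter p

lemma getD_lt_getD {l : List ℕ} (hl : List.Pairwise (· < ·) l) {i j : ℕ}
    (hij : i < j) (hj : j < l.length) : l.getD i 0 < l.getD j 0 := by
  rw [List.getD_eq_getElem _ _ (lt_trans hij hj), List.getD_eq_getElem _ _ hj]
  exact List.pairwise_iff_getElem.1 hl i j (lt_trans hij hj) hj hij

lemma self_le_getD {l : List ℕ} (hl : List.Pairwise (· < ·) l) :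
    ∀ i, i < l.length → i ≤ l.getD i 0 := by
  intro i
  induction i with
  | zero => intro _; exact Nat.zero_le _
  | succ i ih =>
    intro hi
    have h1 : i < l.length := by omega
    have h2 : l.getD i 0 < l.getD (i+1) 0 := getD_lt_getD hl (by omega) hi
    have h3 := ih h1
    show i + 1 ≤ l.getD (i+1) 0
    omega

lemma getD_add_le {l : List ℕ} (hl : List.Pairwise (· < ·) l) :
    ∀ d i, i + d < l.length → l.getD i 0 + d ≤ l.getD (i + d) 0 := by
  intro d
  induction d with
  | zero => intro i _; exact le_rfl
  | succ d ih =>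
    intro i hi
    have h1 : i + d < l.length := by omega
    have h2 := ih i h1
    have h3 : l.getD (i + d) 0 < l.getD (i + d + 1) 0 :=
      getD_lt_getD hl (Nat.lt_succ_self _) (by omega)
    have : i + (d+1) = i + d + 1 := by omega
    rw [this]
    omega

/-- the count `N`: number of ones with more than `y` zeros before them. -/
def Ncnt (γ : List Bool) (y : ℕ) : ℕ :=
  ((List.range γ.length).filter (fun j => pb γ j && decide (y < zerosBefore γ j))).length

lemma filterMap_if {α β : Type*} (P : α → Prop) [DecidablePred P] (g : α → β) (l : List α) :
    l.filterMap (fun a => if P a then some (g a) else none)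
      = (l.filter (fun a => decide (P a))).map g := by
  induction l with
  | nil => simp
  | cons a l ih =>
    by_cases h : P a <;> simp [List.filterMap_cons, List.filter_cons, h, ih]

/-- the parts list of `shapeOf`, ascending -/
def partsL (γ : List Bool) : List ℕ :=
  (((List.range γ.length).filter (fun j => pb γ j && decide (0 < zerosBefore γ j))).map
    (fun j => zerosBefore γ j))

lemma shapeOf_eq (γ : List Bool) : shapeOf γ = ↑(partsL γ) := by
  unfold shapeOf partsL
  congr 1
  rw [filterMap_if (fun j => γ.getD j false = true ∧ 0 < zerosBefore γ j)
    (fun j => zerosBefore γ j)]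
  congr 1
  apply List.filter_congr
  intro x _
  cases h : pb γ x <;> simp [pb] at h <;> simp [h]

lemma partsL_sorted (γ : List Bool) : List.Pairwise (· ≤ ·) (partsL γ) := by
  unfold partsL
  apply List.Pairwise.map
  · intro a b hab
    exact zerosBefore_mono γ (le_of_lt hab)
  · exact sorted_filter_range _ _

lemma sort_shapeOf (γ : List Bool) : (shapeOf γ).sort (· ≤ ·) = partsL γ := by
  apply List.Perm.eq_of_pairwise' (Multiset.pairwise_sort ..) (partsL_sorted γ)
  rw [← Multiset.coe_eq_coe, Multiset.sort_eq, shapeOf_eq]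

lemma getD_reverse_iff (D : List ℕ) (hD : List.Pairwise (fun a b => b ≤ a) D) (x y : ℕ) :
    y < D.getD x 0 ↔ x < D.countP (fun d => decide (y < d)) := by
  induction D generalizing x with
  | nil => simp
  | cons d D ih =>
    rw [List.pairwise_cons] at hD
    rw [List.countP_cons]
    cases x with
    | zero =>
      simp only [List.getD_cons_zero]
      constructor
      · intro h; split <;> [omega; simp_all]
      · intro h
        by_cases hyd : y < d
        · exact hyd
        · rw [if_neg (by simpa using hyd)] at h
          rw [Nat.add_zero] at h
          obtain ⟨e, he, hye⟩ := List.countP_pos_iff.1 h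
          have := hD.1 e he
          simp at hye
          omega
    | succ x =>
      rw [List.getD_cons_succ]
      by_cases hyd : y < d
      · rw [if_pos (by simpa using hyd)]
        rw [ih hD.2 x]
        omega
      · rw [if_neg (by simpa using hyd)]
        have hz : D.countP (fun e => decide (y < e)) = 0 := by
          rw [List.countP_eq_zero]
          intro e he
          have := hD.1 e he
          simp
          omega
        rw [hz]
        simp only [Nat.add_zero]
        constructor
        · intro hx
          exfalso
          rcases lt_or_ge x D.length with hxl | hxl
          · rw [List.getD_eq_getElem _ _ hxl] at hx
            have := hD.1 _ (List.getElem_mem hxl)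
            omega
          · rw [List.getD_eq_default _ _ hxl] at hx; omega
        · intro hx
          exfalso
          have : (0:ℕ) < D.countP (fun e => decide (y < e)) + if (decide (y < d)) = true then 1 else 0 := by
            omega
          rw [hz, if_neg (by simpa using hyd)] at this
          omega

lemma Ncnt_eq_countP (γ : List Bool) (y : ℕ) :
    Ncnt γ y = (partsL γ).countP (fun d => decide (y < d)) := by
  unfold Ncnt partsL
  rw [List.countP_map, List.countP_eq_length_filter]
  unfold Function.comp
  rw [List.filter_filter]
  congr 1
  apply List.filter_congr
  intro x _
  by_cases h1 : pb γ x <;> by_cases h2 : y < zerosBefore γ x <;>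
    simp [h1, h2] <;> omega

lemma mem_cells (γ : List Bool) (x y : ℕ) :
    (x, y) ∈ cells (shapeOf γ) ↔ x < Ncnt γ y := by
  have hcnt : ((partsL γ).reverse).countP (fun d => decide (y < d)) = Ncnt γ y := by
    rw [List.countP_reverse, Ncnt_eq_countP]
  have hrev : List.Pairwise (fun a b => b ≤ a) ((partsL γ).reverse) :=
    List.pairwise_reverse.2 (partsL_sorted γ)
  have hiff := getD_reverse_iff _ hrev x y
  rw [hcnt] at hiff
  unfold cells
  rw [Finset.mem_filter, Finset.mem_product, Finset.mem_range, Finset.mem_range,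
    sort_shapeOf]
  constructor
  · rintro ⟨⟨_, _⟩, h3⟩
    exact hiff.1 h3
  · intro hx
    have h3 : y < (partsL γ).reverse.getD x 0 := hiff.2 hx
    have hxlen : x < (partsL γ).reverse.length := by
      have := List.countP_le_length (p := fun d => decide (y < d)) (l := (partsL γ).reverse)
      rw [hcnt] at this
      omega
    refine ⟨⟨?_, ?_⟩, h3⟩
    · rw [shapeOf_eq, Multiset.coe_card]
      rw [List.length_reverse] at hxlen
      exact hxlen
    · have hmem : (partsL γ).reverse.getD x 0 ∈ shapeOf γ := by
        rw [List.getD_eq_getElem _ _ hxlen]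
        rw [shapeOf_eq, Multiset.mem_coe, ← List.mem_reverse]
        exact List.getElem_mem hxlen
      have := Multiset.le_sup hmem
      omega


lemma length_filter_eq {α : Type*} (l : List α) (d : α) (q : α → Bool) :
    (l.filter q).length = ((List.range l.length).filter (fun i => q (l.getD i d))).length := by
  induction l with
  | nil => simp
  | cons a l ih =>
    rw [List.length_cons, List.range_succ_eq_map]
    have hmap : (List.map Nat.succ (List.range l.length)).filter
        (fun i => q ((a :: l).getD i d))
        = List.map Nat.succ ((List.range l.length).filter (fun i => q (l.getD i d))) := by
      rw [List.filter_map]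
      congr 1
    rw [List.filter_cons, List.filter_cons, hmap]
    have h0 : (a :: l).getD 0 d = a := List.getD_cons_zero
    rw [h0]
    cases hqa : q a <;> simp [ih]

def onesL (γ : List Bool) : List ℕ := (List.range γ.length).filter (pb γ)

def qof (γ : List Bool) (i : ℕ) : ℕ := (onesL γ).getD i 0 - i

lemma onesL_sorted (γ : List Bool) : List.Pairwise (· < ·) (onesL γ) :=
  sorted_filter_range _ _

lemma qof_mono (γ : List Bool) {i j : ℕ} (hij : i ≤ j) (hj : j < (onesL γ).length) :
    qof γ i ≤ qof γ j := by
  have h := getD_add_le (onesL_sorted γ) (j - i) i (by omega)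
  have hji : i + (j - i) = j := by omega
  rw [hji] at h
  unfold qof
  omega

lemma Ncnt_eq_q (γ : List Bool) (y : ℕ) :
    Ncnt γ y = ((List.range (onesL γ).length).filter
      (fun i => decide (y < qof γ i))).length := by
  have h1 : Ncnt γ y = ((onesL γ).filter (fun j => decide (y < zerosBefore γ j))).length := by
    unfold Ncnt onesL
    rw [List.filter_filter]
    congr 1
    apply List.filter_congr
    intro x _
    cases h : pb γ x <;> simp [h]
  have h2 : ∀ i, i < (onesL γ).length → zerosBefore γ ((onesL γ).getD i 0) = qof γ i := by
    intro i hi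
    have hmem : (onesL γ).getD i 0 ∈ onesL γ := by
      rw [List.getD_eq_getElem _ _ hi]; exact List.getElem_mem hi
    have hlt := (mem_filter_range hmem).1
    unfold qof
    rw [zerosBefore_eq γ _ (le_of_lt hlt)]
    congr 1
    exact filter_range_getD (pb γ) γ.length i hi
  rw [h1, length_filter_eq (onesL γ) 0 _]
  congr 1
  apply List.filter_congr
  intro i hi
  rw [List.mem_range] at hi
  rw [h2 i hi]

lemma length_filter_range_card (m : ℕ) (p : ℕ → Prop) [DecidablePred p] :
    ((List.range m).filter (fun i => decide (p i))).length = ((Finset.range m).filter p).card := by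
  rw [Finset.card_def, Finset.filter_val, Finset.range_val, ← Multiset.coe_range,
    Multiset.filter_coe, Multiset.coe_card]

lemma count_mono_filter (q : ℕ → ℕ) (m : ℕ) (hq : ∀ i j, i ≤ j → j < m → q i ≤ q j) (x y : ℕ) :
    x < ((List.range m).filter (fun i => decide (y < q i))).length ↔
      x < m ∧ y < q (m - 1 - x) := by
  rw [length_filter_range_card m (fun i => y < q i)]
  set S := (Finset.range m).filter (fun i => y < q i) with hS
  constructor
  · intro hx
    have hxm : x < m := lt_of_lt_of_le hx
      (le_trans (Finset.card_filter_le _ _) (le_of_eq (Finset.card_range m)))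
    refine ⟨hxm, ?_⟩
    by_contra hy
    push_neg at hy
    have hsub : S ⊆ Finset.Ico (m - x) m := by
      intro i hi
      rw [hS, Finset.mem_filter, Finset.mem_range] at hi
      rw [Finset.mem_Ico]
      refine ⟨?_, hi.1⟩
      by_contra hlt
      push_neg at hlt
      have : q i ≤ q (m - 1 - x) := hq i (m - 1 - x) (by omega) (by omega)
      omega
    have := Finset.card_le_card hsub
    rw [Nat.card_Ico] at this
    omega
  · rintro ⟨hxm, hy⟩
    have hsub : Finset.Icc (m - 1 - x) (m - 1) ⊆ S := by
      intro i hi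
      rw [Finset.mem_Icc] at hi
      rw [hS, Finset.mem_filter, Finset.mem_range]
      have : q (m - 1 - x) ≤ q i := hq _ _ hi.1 (by omega)
      exact ⟨by omega, by omega⟩
    have := Finset.card_le_card hsub
    rw [Nat.card_Icc] at this
    omega

lemma Ncnt_iff (γ : List Bool) (x y : ℕ) :
    x < Ncnt γ y ↔ x < (onesL γ).length ∧ y < qof γ ((onesL γ).length - 1 - x) := by
  rw [Ncnt_eq_q]
  exact count_mono_filter (qof γ) (onesL γ).length (fun i j hij hj => qof_mono γ hij hj) x y

lemma mem_cells_q (γ : List Bool) (x y : ℕ) :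
    (x, y) ∈ cells (shapeOf γ) ↔
      x < (onesL γ).length ∧ y < qof γ ((onesL γ).length - 1 - x) := by
  rw [mem_cells, Ncnt_iff]


lemma range'_split (s c1 c2 : ℕ) :
    List.range' s (c1 + c2) = List.range' s c1 ++ List.range' (s + c1) c2 := by
  have h := @List.range'_append s c1 c2 1
  rw [one_mul] at h
  rw [← h]

lemma count_take_drop (γ : List Bool) :
    ∀ c s, s + c ≤ γ.length →
      ((γ.drop s).take c).count true = ((List.range' s c).filter (pb γ)).length := by
  intro c
  induction c with
  | zero => intro s _; simp
  | succ c ih =>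
    intro s h
    have hs : s < γ.length := by omega
    rw [List.range'_succ, List.filter_cons]
    have hd : γ.drop s = γ[s] :: γ.drop (s + 1) := (List.getElem_cons_drop hs).symm
    rw [hd, List.take_succ_cons, List.count_cons, ih (s + 1) (by omega)]
    have hpbs : pb γ s = γ[s] := List.getD_eq_getElem γ false hs
    cases hv : γ[s] <;> simp [List.getElem?_eq_getElem hs, hv]

end CometRows

open CometRows

/-- Comét's lemma, second part: the number of rows occupied by the removed rim hook
sh(β) ∖ sh(β') equals the number of 1's of β in positions a through a + k inclusive. -/
theorem comet_rows (β β' : List Bool) (a k : ℕ) (hk : 0 < k) (h : SwapAt β β' a k) :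
    rimRows (cells (shapeOf β) \ cells (shapeOf β')) =
      ((β.drop a).take (k + 1)).count true := by
  obtain ⟨hbn, ha, hb, hβ'⟩ := h
  set n := β.length with hn
  set b := a + k with hbdef
  have hlen' : β'.length = n := by rw [hβ']; simp [hn]
  have hab : a < b := by omega
  have han : a < n := by omega
  have hga : β[a]'(by omega) = false := by
    rw [← List.getD_eq_getElem β true (by omega)]; exact ha
  have hpa : pb β a = false := by
    show β.getD a false = false
    rw [List.getD_eq_getElem β false (by omega)]; exact hga
  have hpb : pb β b = true := hb
  have hpa' : pb β' a = true := by
    show β'.getD a false = true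
    rw [hβ', List.getD_eq_getElem?_getD, List.getElem?_set_ne (show b ≠ a by omega),
      List.getElem?_set_self (show a < β.length by omega)]
    rfl
  have hpb' : pb β' b = false := by
    show β'.getD b false = false
    rw [hβ', List.getD_eq_getElem?_getD,
      List.getElem?_set_self (show b < (β.set a true).length by rw [List.length_set]; omega)]
    rfl
  have hpne : ∀ j, j ≠ a → j ≠ b → pb β' j = pb β j := by
    intro j hja hjb
    show β'.getD j false = β.getD j false
    rw [hβ', List.getD_eq_getElem?_getD, List.getD_eq_getElem?_getD,
      List.getElem?_set_ne (Ne.symm hjb), List.getElem?_set_ne (Ne.symm hja)]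
  set A := (List.range' 0 a).filter (pb β) with hA
  set M := (List.range' (a+1) (k-1)).filter (pb β) with hM
  set C := (List.range' (b+1) (n-b-1)).filter (pb β) with hC
  have hbeq : a + 1 + (k - 1) = b := by omega
  have hsplit : List.range n
      = List.range' 0 a ++ ([a] ++ (List.range' (a+1) (k-1) ++ ([b] ++ List.range' (b+1) (n-b-1)))) := by
    rw [List.range_eq_range']
    conv_lhs => rw [show n = a + (1 + ((k-1) + (1 + (n-b-1)))) by omega]
    rw [range'_split 0 a _, Nat.zero_add, range'_split a 1 _,
      range'_split (a+1) (k-1) _, hbeq, range'_split b 1 _]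
    simp [List.range'_one]
  have hfa : List.filter (pb β) [a] = [] := by
    simp only [List.filter_cons, List.filter_nil, hpa]; rfl
  have hfb : List.filter (pb β) [b] = [b] := by
    simp only [List.filter_cons, List.filter_nil, hpb]; rfl
  have hPβ : onesL β = A ++ (M ++ ([b] ++ C)) := by
    unfold onesL
    rw [← hn, hsplit]
    simp only [List.filter_append]
    rw [hfa, hfb]
    simp
    rfl
  have cA : (List.range' 0 a).filter (pb β') = A := by
    rw [hA]
    apply List.filter_congr
    intro x hx
    obtain ⟨i, hi, rfl⟩ := List.mem_range'.1 hx
    exact hpne _ (by omega) (by omega)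
  have cM : (List.range' (a+1) (k-1)).filter (pb β') = M := by
    rw [hM]
    apply List.filter_congr
    intro x hx
    obtain ⟨i, hi, rfl⟩ := List.mem_range'.1 hx
    exact hpne _ (by omega) (by omega)
  have cC : (List.range' (b+1) (n-b-1)).filter (pb β') = C := by
    rw [hC]
    apply List.filter_congr
    intro x hx
    obtain ⟨i, hi, rfl⟩ := List.mem_range'.1 hx
    exact hpne _ (by omega) (by omega)
  have hfa' : List.filter (pb β') [a] = [a] := by
    simp only [List.filter_cons, List.filter_nil, hpa']; rfl
  have hfb' : List.filter (pb β') [b] = [] := by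
    simp only [List.filter_cons, List.filter_nil, hpb']; rfl
  have hPβ' : onesL β' = A ++ ([a] ++ (M ++ C)) := by
    unfold onesL
    rw [hlen', hsplit]
    simp only [List.filter_append]
    rw [hfa', hfb', cA, cM, cC]
    simp
  set s := A.length with hsA
  set μ := M.length with hμM
  set mm := (onesL β).length with hmmdef
  have hmm : mm = s + (μ + (1 + C.length)) := by rw [hmmdef, hPβ]; simp; omega
  have hmm' : (onesL β').length = mm := by rw [hPβ']; simp; omega
  set t := s + μ with ht
  have htmm : t < mm := by omega
  have hMe : ∀ x ∈ M, a < x ∧ x < b := by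
    intro x hx
    rw [hM] at hx
    have h1 := (List.mem_filter.1 hx).1
    obtain ⟨i, hi, rfl⟩ := List.mem_range'.1 h1
    omega
  have hCe : ∀ x ∈ C, b < x := by
    intro x hx
    rw [hC] at hx
    have h1 := (List.mem_filter.1 hx).1
    obtain ⟨i, hi, rfl⟩ := List.mem_range'.1 h1
    omega
  have hMsort : List.Pairwise (· < ·) M := by
    rw [hM]; exact (List.pairwise_lt_range' 1).filter _
  have hgetlt : ∀ i, s ≤ i → i ≤ t → (onesL β').getD i 0 < (onesL β).getD i 0 := by
    intro i hsi hit
    have e2 : (onesL β).getD i 0 = (M ++ ([b] ++ C)).getD (i - s) 0 := by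
      rw [hPβ, List.getD_append_right A _ 0 i (by omega), ← hsA]
    by_cases his : i = s
    · have e1 : (onesL β').getD i 0 = a := by
        rw [hPβ', List.getD_append_right A _ 0 i (by omega), ← hsA, his, Nat.sub_self]
        rfl
      have hlen2 : 0 < (M ++ ([b] ++ C)).length := by simp
      have hmem : (M ++ ([b] ++ C)).getD 0 0 ∈ M ++ ([b] ++ C) := by
        rw [List.getD_eq_getElem _ _ hlen2]; exact List.getElem_mem hlen2
      have hgt : a < (M ++ ([b] ++ C)).getD 0 0 := by
        rcases List.mem_append.1 hmem with hm | hm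
        · exact (hMe _ hm).1
        · rcases List.mem_append.1 hm with hm2 | hm2
          · rw [List.mem_singleton] at hm2; omega
          · have := hCe _ hm2; omega
      rw [e1, e2, his, Nat.sub_self]
      exact hgt
    · have hsi' : s < i := lt_of_le_of_ne hsi (Ne.symm his)
      have hidx : i - s - 1 < μ := by omega
      have e1 : (onesL β').getD i 0 = M.getD (i - s - 1) 0 := by
        rw [hPβ', List.getD_append_right A _ 0 i (by omega), ← hsA,
          List.singleton_append, show i - s = (i - s - 1) + 1 by omega, List.getD_cons_succ,
          List.getD_append _ _ _ _ (by omega)]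
        congr 1 <;> omega
      rcases lt_or_ge (i - s) μ with him | him
      · have hlt := getD_lt_getD hMsort (show i - s - 1 < i - s by omega)
          (show i - s < M.length by omega)
        rw [e1, e2, List.getD_append _ _ _ _ (show i - s < M.length by omega)]
        exact hlt
      · have hisμ : i - s = μ := by omega
        have hmemM : M.getD (i - s - 1) 0 ∈ M := by
          rw [List.getD_eq_getElem _ _ (show i - s - 1 < M.length by omega)]
          exact List.getElem_mem _
        rw [e1, e2, List.getD_append_right M _ 0 _ (by omega),
          show i - s - M.length = 0 by omega, List.singleton_append, List.getD_cons_zero]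
        exact (hMe _ hmemM).2
  have hgeteq : ∀ i, i < mm → (i < s ∨ t < i) → (onesL β').getD i 0 = (onesL β).getD i 0 := by
    intro i him hcase
    rcases hcase with hlt | hgt
    · rw [hPβ, hPβ', List.getD_append _ _ _ _ (by omega), List.getD_append _ _ _ _ (by omega)]
    · have e2 : (onesL β).getD i 0 = C.getD (i - s - μ - 1) 0 := by
        rw [hPβ, List.getD_append_right A _ 0 i (by omega),
          List.getD_append_right M _ 0 _ (by omega), List.singleton_append,
          show i - A.length - M.length = (i - s - μ - 1) + 1 by omega, List.getD_cons_succ]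
        congr 1 <;> omega
      have e1 : (onesL β').getD i 0 = C.getD (i - s - μ - 1) 0 := by
        rw [hPβ', List.getD_append_right A _ 0 i (by omega), List.singleton_append,
          show i - A.length = (i - s - 1) + 1 by omega, List.getD_cons_succ,
          List.getD_append_right M _ 0 _ (by omega),
          show i - s - 1 - M.length = i - s - μ - 1 by omega]
        congr 1 <;> omega
      rw [e1, e2]
  have hq : ∀ i, s ≤ i → i ≤ t → qof β' i < qof β i := by
    intro i h1 h2
    have hilen' : i < (onesL β').length := by omega
    have hself := self_le_getD (onesL_sorted β') i hilen'
    have hlt := hgetlt i h1 h2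
    unfold qof
    omega
  have hqeq : ∀ i, i < mm → (i < s ∨ t < i) → qof β' i = qof β i := by
    intro i him hc
    unfold qof
    rw [hgeteq i him hc]
  have hdiff : ∀ x y : ℕ, ((x, y) ∈ cells (shapeOf β) \ cells (shapeOf β')) ↔
      (x < mm ∧ qof β' (mm - 1 - x) ≤ y ∧ y < qof β (mm - 1 - x)) := by
    intro x y
    rw [Finset.mem_sdiff, mem_cells_q, mem_cells_q, hmm', ← hmmdef]
    constructor
    · rintro ⟨⟨h1, h2⟩, h3⟩
      refine ⟨h1, ?_, h2⟩
      by_contra hy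
      exact h3 ⟨h1, by omega⟩
    · rintro ⟨h1, h2, h3⟩
      refine ⟨⟨h1, h3⟩, ?_⟩
      rintro ⟨-, h5⟩
      omega
  have himg : (cells (shapeOf β) \ cells (shapeOf β')).image Prod.fst
      = (Finset.Icc s t).image (fun i => mm - 1 - i) := by
    ext x
    simp only [Finset.mem_image]
    constructor
    · rintro ⟨⟨x', y⟩, hmem, hfst⟩
      rw [hdiff x' y] at hmem
      obtain ⟨h1, h2, h3⟩ := hmem
      have hin : s ≤ mm - 1 - x' ∧ mm - 1 - x' ≤ t := by
        rcases Nat.lt_or_ge (mm - 1 - x') s with hlt | hge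
        · have := hqeq _ (by omega) (Or.inl hlt); omega
        · rcases Nat.lt_or_ge t (mm - 1 - x') with hgt | hle
          · have := hqeq _ (by omega) (Or.inr hgt); omega
          · exact ⟨hge, hle⟩
      have hx' : x' = x := hfst
      refine ⟨mm - 1 - x', Finset.mem_Icc.2 hin, ?_⟩
      omega
    · rintro ⟨i, hi, rfl⟩
      rw [Finset.mem_Icc] at hi
      refine ⟨(mm - 1 - i, qof β' i), ?_, rfl⟩
      rw [hdiff]
      have e : mm - 1 - (mm - 1 - i) = i := by omega
      rw [e]
      exact ⟨by omega, le_refl _, hq i hi.1 hi.2⟩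
  unfold rimRows
  rw [himg, Finset.card_image_of_injOn ?hinj, Nat.card_Icc]
  case hinj =>
    intro i hi j hj hij
    simp only [Finset.coe_Icc, Set.mem_Icc] at hi hj
    have hij' : mm - 1 - i = mm - 1 - j := hij
    omega
  have hcnt := count_take_drop β (k + 1) a (by omega)
  rw [hcnt]
  have hw : List.range' a (k + 1) = [a] ++ (List.range' (a + 1) (k - 1) ++ [b]) := by
    conv_lhs => rw [show k + 1 = 1 + ((k - 1) + 1) by omega]
    rw [range'_split a 1 _, range'_split (a + 1) (k - 1) _, hbeq]
    simp [List.range'_one]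
  rw [hw]
  simp only [List.filter_append]
  rw [hfa, hfb, ← hM]
  simp only [List.length_append, List.length_nil, List.length_singleton]
  omega
end

section
/- For any cascade C, the weight wt(C) = (−1)^{cr(C)} equals the sign of the associated permutation π_C. -/
section Dev
open Finset

abbrev stp (r : List Bool) (ab : ℕ × ℕ) : List Bool := (r.set ab.1 true).set ab.2 false

def OnesF (r : List Bool) : Finset ℕ :=
  (Finset.range r.length).filter (fun j => r.getD j false = true)

lemma mem_OnesF {r : List Bool} {x : ℕ} :
    x ∈ OnesF r ↔ x < r.length ∧ r.getD x false = true := by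
  simp [OnesF]

lemma applySwaps_nil (r : List Bool) : applySwaps r [] = r := rfl

lemma applySwaps_cons (r : List Bool) (ab : ℕ × ℕ) (s : List (ℕ × ℕ)) :
    applySwaps r (ab :: s) = applySwaps (stp r ab) s := rfl

lemma length_stp (r : List Bool) (ab : ℕ × ℕ) : (stp r ab).length = r.length := by
  simp [stp]

lemma length_applySwaps (s : List (ℕ × ℕ)) : ∀ r : List Bool, (applySwaps r s).length = r.length := by
  induction s with
  | nil => intro r; rfl
  | cons ab s ih => intro r; rw [applySwaps_cons, ih, length_stp]

lemma traceSwaps_nil (p : ℕ) : traceSwaps [] p = p := rfl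

lemma traceSwaps_cons (ab : ℕ × ℕ) (s : List (ℕ × ℕ)) (p : ℕ) :
    traceSwaps (ab :: s) p = traceSwaps s (Equiv.swap ab.1 ab.2 p) := by
  simp only [traceSwaps, List.foldl_cons, Equiv.swap_apply_def]

lemma traceSwaps_injective (s : List (ℕ × ℕ)) : Function.Injective (traceSwaps s) := by
  induction s with
  | nil => exact fun a b h => h
  | cons ab s ih =>
    intro x y h
    rw [traceSwaps_cons, traceSwaps_cons] at h
    exact (Equiv.swap ab.1 ab.2).injective (ih h)

lemma getD_set (l : List Bool) (i j : ℕ) (a : Bool) :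
    (l.set i a).getD j false = if i = j ∧ i < l.length then a else l.getD j false := by
  rw [List.getD_eq_getElem?_getD, List.getD_eq_getElem?_getD, List.getElem?_set]
  by_cases hij : i = j
  · subst hij
    by_cases hil : i < l.length
    · simp [hil]
    · simp [hil, List.getElem?_eq_none (le_of_not_gt hil)]
  · simp [hij]

lemma getD_stp {r : List Bool} {a b : ℕ} (ha : a < r.length) (hb : b < r.length) (j : ℕ) :
    (stp r (a, b)).getD j false =
      if j = b then false else if j = a then true else r.getD j false := by
  unfold stp
  rw [getD_set, getD_set]
  simp only [List.length_set]
  simp only [List.length_set, hb, ha, and_true]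
  split_ifs <;> first | rfl | omega

def OK : List Bool → List (ℕ × ℕ) → Prop
  | _, [] => True
  | r, ab :: s => ab.1 < ab.2 ∧ ab.2 < r.length ∧ r.getD ab.1 true = false ∧
      r.getD ab.2 false = true ∧ OK (stp r ab) s

lemma OK_a_lt {r : List Bool} {a : ℕ} (h : r.getD a true = false) :
    a < r.length ∧ r.getD a false = false := by
  by_cases ha : a < r.length
  · rw [List.getD_eq_getElem r true ha] at h
    rw [List.getD_eq_getElem r false ha]
    exact ⟨ha, h⟩
  · rw [List.getD_eq_default r true (le_of_not_gt ha)] at h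
    exact absurd h (by simp)

lemma swap_mem_OnesF {r : List Bool} {a b : ℕ} (hab : a < b) (hb : b < r.length)
    (ha0 : r.getD a false = false) (hb1 : r.getD b false = true) {x : ℕ} (hx : x ∈ OnesF r) :
    Equiv.swap a b x ∈ OnesF (stp r (a, b)) := by
  have ha : a < r.length := lt_trans hab hb
  obtain ⟨hxl, hx1⟩ := mem_OnesF.1 hx
  have hxa : x ≠ a := fun h => by rw [h, ha0] at hx1; exact absurd hx1 (by simp)
  rw [mem_OnesF, length_stp]
  by_cases hxb : x = b
  · rw [hxb, Equiv.swap_apply_right, getD_stp ha hb]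
    simp [Nat.ne_of_lt hab, ha]
  · rw [Equiv.swap_apply_of_ne_of_ne hxa hxb, getD_stp ha hb, if_neg hxb, if_neg hxa]
    exact ⟨hxl, hx1⟩

lemma swap_mem_OnesF' {r : List Bool} {a b : ℕ} (hab : a < b) (hb : b < r.length)
    (ha0 : r.getD a false = false) (hb1 : r.getD b false = true) {x : ℕ}
    (hx : x ∈ OnesF (stp r (a, b))) : Equiv.swap a b x ∈ OnesF r := by
  have ha : a < r.length := lt_trans hab hb
  obtain ⟨hxl, hx1⟩ := mem_OnesF.1 hx
  rw [length_stp] at hxl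
  rw [getD_stp ha hb] at hx1
  have hxb : x ≠ b := by intro h; simp [h] at hx1
  rw [mem_OnesF]
  by_cases hxa : x = a
  · rw [hxa, Equiv.swap_apply_left]
    exact ⟨hb, hb1⟩
  · rw [Equiv.swap_apply_of_ne_of_ne hxa hxb]
    rw [if_neg hxb, if_neg hxa] at hx1
    exact ⟨hxl, hx1⟩

lemma trace_mem_OnesF (s : List (ℕ × ℕ)) : ∀ r : List Bool, OK r s → ∀ x ∈ OnesF r,
    traceSwaps s x ∈ OnesF (applySwaps r s) := by
  induction s with
  | nil => intro r _ x hx; exact hx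
  | cons ab s ih =>
    intro r hOK x hx
    obtain ⟨hab, hb, ha0', hb1, hOK'⟩ := hOK
    obtain ⟨_, ha0⟩ := OK_a_lt ha0'
    rw [traceSwaps_cons, applySwaps_cons]
    exact ih (stp r ab) hOK' _ (swap_mem_OnesF hab hb ha0 hb1 hx)

lemma OK_of : ∀ (s : List (ℕ × ℕ)) (r : List Bool),
    (∀ i < s.length,
      (s.getD i (0, 0)).1 < (s.getD i (0, 0)).2 ∧
      (s.getD i (0, 0)).2 < (applySwaps r (s.take i)).length ∧
      (applySwaps r (s.take i)).getD (s.getD i (0, 0)).1 true = false ∧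
      (applySwaps r (s.take i)).getD (s.getD i (0, 0)).2 false = true) → OK r s := by
  intro s
  induction s with
  | nil => intro r _; trivial
  | cons ab s ih =>
    intro r H
    have h0 := H 0 (Nat.succ_pos _)
    simp only [List.getD_cons_zero, List.take_zero, applySwaps_nil] at h0
    refine ⟨h0.1, h0.2.1, h0.2.2.1, h0.2.2.2, ih (stp r ab) ?_⟩
    intro i hi
    have := H (i + 1) (by simpa using Nat.succ_lt_succ hi)
    simpa only [List.getD_cons_succ, List.take_succ_cons, applySwaps_cons] using this

lemma card_filter_product {α β : Type*} (s : Finset α) (t : Finset β) (P : α → β → Prop)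
    [DecidablePred fun p : α × β => P p.1 p.2] [∀ a, DecidablePred (P a)] :
    ((s ×ˢ t).filter fun p => P p.1 p.2).card = ∑ a ∈ s, (t.filter (P a)).card := by
  rw [Finset.card_filter, Finset.sum_product]
  exact Finset.sum_congr rfl fun a _ => (Finset.card_filter _ _).symm

lemma crossings_card (r : List Bool) (s : List (ℕ × ℕ)) :
    (cascadeCrossings ⟨r, s⟩).card = ∑ i ∈ Finset.range s.length,
      ((Finset.range r.length).filter fun j =>
        (applySwaps r (s.take i)).getD j false = true ∧
        (s.getD i (0, 0)).1 < j ∧ j < (s.getD i (0, 0)).2).card := by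
  unfold cascadeCrossings cascadeRow
  rw [Finset.card_filter, Finset.sum_product]
  exact Finset.sum_congr rfl fun a _ => (Finset.card_filter _ _).symm

lemma crossings_cons (r : List Bool) (ab : ℕ × ℕ) (s : List (ℕ × ℕ)) :
    (cascadeCrossings ⟨r, ab :: s⟩).card =
      ((OnesF r).filter fun x => ab.1 < x ∧ x < ab.2).card +
        (cascadeCrossings ⟨stp r ab, s⟩).card := by
  rw [crossings_card, crossings_card]
  rw [List.length_cons, Finset.sum_range_succ']
  rw [add_comm]
  congr 1
  · simp only [List.take_zero, applySwaps_nil, List.getD_cons_zero]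
    rw [OnesF, Finset.filter_filter]
  · apply Finset.sum_congr rfl
    intro i _
    have h1 : r.length = (stp r ab).length := (length_stp r ab).symm
    simp only [List.take_succ_cons, applySwaps_cons, List.getD_cons_succ, h1]

def SP (r : List Bool) : Finset (ℕ × ℕ) := (OnesF r ×ˢ OnesF r).filter fun p => p.1 < p.2

def traceInv (s : List (ℕ × ℕ)) (r : List Bool) : Finset (ℕ × ℕ) :=
  (SP r).filter fun p => traceSwaps s p.2 < traceSwaps s p.1

lemma mem_SP {r : List Bool} {p : ℕ × ℕ} :
    p ∈ SP r ↔ p.1 ∈ OnesF r ∧ p.2 ∈ OnesF r ∧ p.1 < p.2 := by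
  simp [SP, Finset.mem_filter, Finset.mem_product, and_assoc]

lemma pow_card_filter {α : Type*} (s : Finset α) (p : α → Prop) [DecidablePred p] :
    ((-1 : ℤ)) ^ (s.filter p).card = ∏ x ∈ s, if p x then (-1 : ℤ) else 1 := by
  rw [Finset.prod_ite, Finset.prod_const, Finset.prod_const, one_pow, mul_one]

section Step

variable {r : List Bool} {a b : ℕ}

lemma mem_OnesF_ne_a (ha0 : r.getD a false = false) {x : ℕ} (hx : x ∈ OnesF r) : x ≠ a := by
  intro h
  have h2 := (mem_OnesF.1 hx).2
  rw [h, ha0] at h2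
  exact Bool.false_ne_true h2

lemma flip_iff (hab : a < b) (hb : b < r.length) (ha0 : r.getD a false = false)
    {x y : ℕ} (hx : x ∈ OnesF r) (hy : y ∈ OnesF r) (hxy : x < y) :
    Equiv.swap a b y < Equiv.swap a b x ↔ y = b ∧ a < x := by
  have hxa := mem_OnesF_ne_a ha0 hx
  have hya := mem_OnesF_ne_a ha0 hy
  by_cases hyb : y = b
  · rw [hyb, Equiv.swap_apply_right,
      Equiv.swap_apply_of_ne_of_ne hxa (show x ≠ b by omega)]
    simp [hyb]
  · by_cases hxb : x = b
    · rw [hxb, Equiv.swap_apply_of_ne_of_ne hya hyb, Equiv.swap_apply_right]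
      constructor
      · intro h; omega
      · intro h; exact absurd h.1 hyb
    · rw [Equiv.swap_apply_of_ne_of_ne hxa hxb, Equiv.swap_apply_of_ne_of_ne hya hyb]
      constructor
      · intro h; omega
      · intro h; exact absurd h.1 hyb

lemma flip_card (hab : a < b) (hb : b < r.length) (ha0 : r.getD a false = false)
    (hb1 : r.getD b false = true) :
    ((SP r).filter fun p => Equiv.swap a b p.2 < Equiv.swap a b p.1).card =
      ((OnesF r).filter fun x => a < x ∧ x < b).card := by
  have hbm : b ∈ OnesF r := mem_OnesF.2 ⟨hb, hb1⟩
  apply Finset.card_nbij' (i := fun p => p.1) (j := fun x => (x, b))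
  · intro p hp
    obtain ⟨hp, hflip⟩ := Finset.mem_filter.1 hp
    obtain ⟨h1, h2, h12⟩ := mem_SP.1 hp
    obtain ⟨hpb, hpa⟩ := (flip_iff hab hb ha0 h1 h2 h12).1 hflip
    exact Finset.mem_filter.2 ⟨h1, hpa, by dsimp only; omega⟩
  · intro x hx
    obtain ⟨hx1, hxa, hxb⟩ := Finset.mem_filter.1 hx
    refine Finset.mem_filter.2 ⟨mem_SP.2 ⟨hx1, hbm, hxb⟩, ?_⟩
    exact (flip_iff hab hb ha0 hx1 hbm hxb).2 ⟨rfl, hxa⟩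
  · intro p hp
    obtain ⟨hp, hflip⟩ := Finset.mem_filter.1 hp
    obtain ⟨h1, h2, h12⟩ := mem_SP.1 hp
    obtain ⟨hpb, _⟩ := (flip_iff hab hb ha0 h1 h2 h12).1 hflip
    exact Prod.ext rfl hpb.symm
  · intro x _; rfl

lemma traceInv_step (hab : a < b) (hb : b < r.length) (ha0 : r.getD a false = false)
    (hb1 : r.getD b false = true) (s : List (ℕ × ℕ)) :
    ((-1 : ℤ)) ^ (traceInv ((a, b) :: s) r).card =
      (-1 : ℤ) ^ ((OnesF r).filter fun x => a < x ∧ x < b).card *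
        (-1 : ℤ) ^ (traceInv s (stp r (a, b))).card := by
  set σ := Equiv.swap a b with hσdef
  set ψ : ℕ × ℕ → ℕ × ℕ := fun p => (min (σ p.1) (σ p.2), max (σ p.1) (σ p.2)) with hψ
  have hσne : ∀ {p : ℕ × ℕ}, p.1 < p.2 → σ p.1 ≠ σ p.2 := fun h12 h =>
    absurd (σ.injective h) (ne_of_lt h12)
  have hmemψ : ∀ p ∈ SP r, ψ p ∈ SP (stp r (a, b)) := by
    intro p hp
    obtain ⟨h1, h2, h12⟩ := mem_SP.1 hp
    have m1 := swap_mem_OnesF hab hb ha0 hb1 h1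
    have m2 := swap_mem_OnesF hab hb ha0 hb1 h2
    refine mem_SP.2 ⟨?_, ?_, min_lt_max.2 (hσne h12)⟩
    · rcases le_total (σ p.1) (σ p.2) with h | h
      · rw [hψ]; simpa [min_eq_left h] using m1
      · rw [hψ]; simpa [min_eq_right h] using m2
    · rcases le_total (σ p.1) (σ p.2) with h | h
      · rw [hψ]; simpa [max_eq_right h] using m2
      · rw [hψ]; simpa [max_eq_left h] using m1
  have hmemψ' : ∀ q ∈ SP (stp r (a, b)), ψ q ∈ SP r := by
    intro q hq
    obtain ⟨h1, h2, h12⟩ := mem_SP.1 hq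
    have m1 := swap_mem_OnesF' hab hb ha0 hb1 h1
    have m2 := swap_mem_OnesF' hab hb ha0 hb1 h2
    refine mem_SP.2 ⟨?_, ?_, min_lt_max.2 (hσne h12)⟩
    · rcases le_total (σ q.1) (σ q.2) with h | h
      · rw [hψ]; simpa [min_eq_left h] using m1
      · rw [hψ]; simpa [min_eq_right h] using m2
    · rcases le_total (σ q.1) (σ q.2) with h | h
      · rw [hψ]; simpa [max_eq_right h] using m2
      · rw [hψ]; simpa [max_eq_left h] using m1
  have hinv : ∀ p : ℕ × ℕ, p.1 < p.2 → ψ (ψ p) = p := by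
    rintro ⟨x, y⟩ h12
    simp only [hψ]
    rcases le_total (σ x) (σ y) with h | h
    · rw [min_eq_left h, max_eq_right h]
      simp only [hσdef, Equiv.swap_apply_self]
      rw [min_eq_left (le_of_lt h12), max_eq_right (le_of_lt h12)]
    · rw [min_eq_right h, max_eq_left h]
      simp only [hσdef, Equiv.swap_apply_self]
      rw [min_eq_right (le_of_lt h12), max_eq_left (le_of_lt h12)]
  have pointwise : ∀ p ∈ SP r,
      (if traceSwaps s (σ p.2) < traceSwaps s (σ p.1) then (-1 : ℤ) else 1) =
        (if σ p.2 < σ p.1 then (-1 : ℤ) else 1) *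
          (if traceSwaps s (ψ p).2 < traceSwaps s (ψ p).1 then (-1 : ℤ) else 1) := by
    intro p hp
    obtain ⟨_, _, h12⟩ := mem_SP.1 hp
    have hne := hσne h12
    simp only [hψ]
    rcases lt_or_gt_of_ne hne with h | h
    · simp only [min_eq_left h.le, max_eq_right h.le]
      rw [if_neg (not_lt.mpr h.le), one_mul]
    · simp only [min_eq_right h.le, max_eq_left h.le]
      rw [if_pos h]
      have htne : traceSwaps s (σ p.1) ≠ traceSwaps s (σ p.2) := fun hh =>
        hne (traceSwaps_injective s hh)
      rcases lt_or_gt_of_ne htne with h2 | h2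
      · rw [if_neg (not_lt.mpr h2.le), if_pos h2]; ring
      · rw [if_pos h2, if_neg (not_lt.mpr h2.le)]; ring
  have hcons : ∀ p : ℕ × ℕ, (traceSwaps ((a, b) :: s) p.2 < traceSwaps ((a, b) :: s) p.1) =
      (traceSwaps s (σ p.2) < traceSwaps s (σ p.1)) := by
    intro p; rw [traceSwaps_cons, traceSwaps_cons]
  rw [traceInv, pow_card_filter]
  simp only [hcons]
  rw [Finset.prod_congr rfl pointwise, Finset.prod_mul_distrib]
  congr 1
  · rw [← pow_card_filter, flip_card hab hb ha0 hb1]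
  · rw [traceInv, pow_card_filter]
    refine Finset.prod_nbij' (i := ψ) (j := ψ) hmemψ hmemψ' ?_ ?_ ?_
    · intro p hp; exact hinv p (mem_SP.1 hp).2.2
    · intro q hq; exact hinv q (mem_SP.1 hq).2.2
    · intro p _; rfl

end Step

lemma main_parity : ∀ (s : List (ℕ × ℕ)) (r : List Bool), OK r s →
    ((-1 : ℤ)) ^ (cascadeCrossings ⟨r, s⟩).card = (-1 : ℤ) ^ (traceInv s r).card := by
  intro s
  induction s with
  | nil =>
    intro r _
    have h1 : (cascadeCrossings ⟨r, []⟩).card = 0 := by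
      rw [crossings_card]; simp
    have h2 : (traceInv [] r).card = 0 := by
      rw [Finset.card_eq_zero, traceInv, Finset.filter_eq_empty_iff]
      intro p hp
      have h12 := (mem_SP.1 hp).2.2
      rw [traceSwaps_nil, traceSwaps_nil]
      omega
    rw [h1, h2]
  | cons ab s ih =>
    intro r hOK
    obtain ⟨a, b⟩ := ab
    obtain ⟨hab, hb, ha0', hb1, hOK'⟩ := hOK
    obtain ⟨ha, ha0⟩ := OK_a_lt ha0'
    rw [crossings_cons, pow_add, ih _ hOK']
    exact (traceInv_step hab hb ha0 hb1 s).symm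

lemma mem_onesPositions {r : List Bool} {x : ℕ} :
    x ∈ onesPositions r ↔ x ∈ OnesF r := by
  simp [onesPositions, OnesF, List.mem_filter]

lemma onesPositions_pairwise (r : List Bool) : (onesPositions r).Pairwise (· < ·) :=
  List.pairwise_lt_range.filter _

lemma onesPositions_nodup (r : List Bool) : (onesPositions r).Nodup :=
  List.nodup_range.filter _

lemma getD_mem {l : List ℕ} {j : ℕ} (hj : j < l.length) : l.getD j 0 ∈ l := by
  rw [List.getD_eq_getElem _ _ hj]
  exact List.getElem_mem hj

lemma sorted_getD_lt {l : List ℕ} (hl : l.Pairwise (· < ·)) {i j : ℕ} (hij : i < j)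
    (hj : j < l.length) : l.getD i 0 < l.getD j 0 := by
  rw [List.getD_eq_getElem _ _ (lt_trans hij hj), List.getD_eq_getElem _ _ hj]
  exact List.pairwise_iff_getElem.1 hl i j (lt_trans hij hj) hj hij

lemma getD_indexOf {l : List ℕ} {u : ℕ} (hu : u ∈ l) : l.getD (l.idxOf u) 0 = u := by
  rw [List.getD_eq_getElem _ _ (List.idxOf_lt_length_iff.2 hu)]
  exact List.getElem_idxOf _

lemma indexOf_getD {l : List ℕ} (hn : l.Nodup) {j : ℕ} (hj : j < l.length) :
    l.idxOf (l.getD j 0) = j := by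
  rw [List.getD_eq_getElem _ _ hj]
  have h1 : l.idxOf l[j] < l.length := List.idxOf_lt_length_iff.2 (List.getElem_mem hj)
  have h2 : l[l.idxOf l[j]] = l[j] := List.getElem_idxOf h1
  exact (List.Nodup.getElem_inj_iff hn).1 h2

lemma sorted_indexOf_lt {l : List ℕ} (hl : l.Pairwise (· < ·)) (hn : l.Nodup) {u v : ℕ}
    (hu : u ∈ l) (hv : v ∈ l) : l.idxOf u < l.idxOf v ↔ u < v := by
  have hiu : l.idxOf u < l.length := List.idxOf_lt_length_iff.2 hu
  have hiv : l.idxOf v < l.length := List.idxOf_lt_length_iff.2 hv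
  have egu : l[l.idxOf u] = u := List.getElem_idxOf hiu
  have egv : l[l.idxOf v] = v := List.getElem_idxOf hiv
  constructor
  · intro h
    have := List.pairwise_iff_getElem.1 hl _ _ hiu hiv h
    rwa [egu, egv] at this
  · intro h
    rcases lt_trichotomy (l.idxOf u) (l.idxOf v) with h' | h' | h'
    · exact h'
    · exfalso
      have : u = v := by
        rw [← egu, ← egv]
        congr 1
      omega
    · exfalso
      have := List.pairwise_iff_getElem.1 hl _ _ hiv hiu h'
      rw [egu, egv] at this
      omega

end Dev

/-- For any cascade C, wt(C) = sgn(π_C). -/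
theorem wt_eq_sign (C : Cascade) (hC : C.Valid) :
    cascadeWt C = signOf (cascadePerm C) (onesPositions C.top).length := by
  obtain ⟨r, s⟩ := C
  obtain ⟨-, -, hswaps, -⟩ := hC
  have hOK : OK r s := OK_of s r hswaps
  set L := onesPositions r with hL
  set M := onesPositions (applySwaps r s) with hM
  have hLp : L.Pairwise (· < ·) := onesPositions_pairwise r
  have hLn : L.Nodup := onesPositions_nodup r
  have hMp : M.Pairwise (· < ·) := onesPositions_pairwise _
  have hMn : M.Nodup := onesPositions_nodup _
  have htr : ∀ x ∈ OnesF r, traceSwaps s x ∈ M := by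
    intro x hx
    exact mem_onesPositions.2 (trace_mem_OnesF s r hOK x hx)
  have hf : ∀ j : ℕ, cascadePerm ⟨r, s⟩ j = M.idxOf (traceSwaps s (L.getD j 0)) :=
    fun _ => rfl
  have hLlen : ∀ {x : ℕ}, x ∈ L → L.idxOf x < L.length :=
    fun hx => List.idxOf_lt_length_iff.2 hx
  unfold cascadeWt signOf
  rw [main_parity s r hOK]
  congr 1
  apply Finset.card_nbij' (i := fun q => (L.idxOf q.1, L.idxOf q.2))
    (j := fun p => (L.getD p.1 0, L.getD p.2 0))
  · intro q hq
    obtain ⟨hq', htrq⟩ := Finset.mem_filter.1 hq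
    obtain ⟨h1, h2, h12⟩ := mem_SP.1 hq'
    have h1L : q.1 ∈ L := mem_onesPositions.2 h1
    have h2L : q.2 ∈ L := mem_onesPositions.2 h2
    refine Finset.mem_filter.2 ⟨Finset.mem_product.2
      ⟨Finset.mem_range.2 (hLlen h1L), Finset.mem_range.2 (hLlen h2L)⟩, ?_, ?_⟩
    · exact (sorted_indexOf_lt hLp hLn h1L h2L).2 h12
    · rw [hf, hf, getD_indexOf h1L, getD_indexOf h2L]
      exact (sorted_indexOf_lt hMp hMn (htr _ h2) (htr _ h1)).2 htrq
  · intro p hp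
    obtain ⟨hp', h12, hfp⟩ := Finset.mem_filter.1 hp
    obtain ⟨hp1, hp2⟩ := Finset.mem_product.1 hp'
    rw [Finset.mem_range] at hp1 hp2
    have h1L : L.getD p.1 0 ∈ L := getD_mem hp1
    have h2L : L.getD p.2 0 ∈ L := getD_mem hp2
    have h1O : L.getD p.1 0 ∈ OnesF r := mem_onesPositions.1 h1L
    have h2O : L.getD p.2 0 ∈ OnesF r := mem_onesPositions.1 h2L
    refine Finset.mem_filter.2 ⟨mem_SP.2 ⟨h1O, h2O, sorted_getD_lt hLp h12 hp2⟩, ?_⟩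
    rw [hf, hf] at hfp
    exact (sorted_indexOf_lt hMp hMn (htr _ h2O) (htr _ h1O)).1 hfp
  · intro q hq
    obtain ⟨hq', _⟩ := Finset.mem_filter.1 hq
    obtain ⟨h1, h2, _⟩ := mem_SP.1 hq'
    exact Prod.ext (getD_indexOf (mem_onesPositions.2 h1)) (getD_indexOf (mem_onesPositions.2 h2))
  · intro p hp
    obtain ⟨hp', _, _⟩ := Finset.mem_filter.1 hp
    obtain ⟨hp1, hp2⟩ := Finset.mem_product.1 hp'
    rw [Finset.mem_range] at hp1 hp2
    exact Prod.ext (indexOf_getD hLn hp1) (indexOf_getD hLn hp2)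
end
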